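/- arXiv:2409.05507 — 8 statements merged into one kernel-verified Lean document; each statement's English description precedes it below -/
import Mathlib

section
/- Let V be a finite-dimensional complex inner product space with Hermitian inner product h, linear in the first argument and conjugate-linear in the second. For a self-adjoint ℂ-linear endomorphism B of V let g_B denote the real bilinear form on V given by g_B(v,w) = Re h(Bv,w), and for a real subspace X of V let X^{⊥,g_B} = {v ∈ V : g_B(v,x) = 0 for all x ∈ X}. Let A and C be self-adjoint ℂ-linear endomorphisms of V with C invertible, and let W be any real subspace of V. Then ((W^{⊥,g_A})^{⊥,g_C})^{⊥,g_A} = W^{⊥,g_D}, where D := A ∘ C⁻¹ ∘ A (a self-adjoint endomorphism of V). -/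
variable {V : Type*} [NormedAddCommGroup V] [InnerProductSpace ℂ V] [FiniteDimensional ℂ V]

/-- The orthogonal complement `X^{⊥, g_B}` of a set of vectors `X` with respect to the real
bilinear form `g_B(v, w) = Re h(B v, w)`, where the Hermitian inner product `h` is linear in
the first argument and conjugate-linear in the second; in Mathlib's convention
`h (B v) w = inner w (B v)`. It is a real subspace of `V`. -/
noncomputable def gperp (B : V →ₗ[ℂ] V) (X : Set V) : Submodule ℝ V where
  carrier := {v | ∀ x ∈ X, (inner ℂ x (B v) : ℂ).re = 0}
  zero_mem' := by intro x hx; simp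
  add_mem' := by
    intro a b ha hb x hx
    simp only [map_add, inner_add_right, Complex.add_re, ha x hx, hb x hx, add_zero]
  smul_mem' := by
    intro r v hv x hx
    rw [LinearMap.map_smul_of_tower, ← Complex.coe_smul, inner_smul_right]
    simp [hv x hx]

open RealInnerProductSpace

section Aux

variable {F : Type*} [NormedAddCommGroup F] [InnerProductSpace ℝ F] [FiniteDimensional ℝ F]

/-- For a real-self-adjoint map, `(map T K)ᗮ = comap T Kᗮ`. -/
theorem orth_map (T : F →ₗ[ℝ] F) (hT : ∀ x y : F, ⟪T x, y⟫ = ⟪x, T y⟫)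
    (K : Submodule ℝ F) : (K.map T)ᗮ = Kᗮ.comap T := by
  ext v
  simp only [Submodule.mem_orthogonal, Submodule.mem_comap, Submodule.mem_map]
  constructor
  · intro h x hx
    rw [← hT]
    exact h (T x) ⟨x, hx, rfl⟩
  · rintro h u ⟨x, hx, rfl⟩
    rw [hT]
    exact h x hx

/-- For a real-self-adjoint map, `(comap T K)ᗮ = map T Kᗮ` (in finite dimension). -/
theorem orth_comap (T : F →ₗ[ℝ] F) (hT : ∀ x y : F, ⟪T x, y⟫ = ⟪x, T y⟫)
    (K : Submodule ℝ F) : (K.comap T)ᗮ = Kᗮ.map T := by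
  have h1 : (Kᗮ.map T)ᗮ = K.comap T := by
    rw [orth_map T hT, Submodule.orthogonal_orthogonal]
  rw [← h1, Submodule.orthogonal_orthogonal]

end Aux

/-- Lemma 3.3 of the paper, operator form:
`((W^{⊥,g_A})^{⊥,g_C})^{⊥,g_A} = W^{⊥,g_D}` with `D = A ∘ C⁻¹ ∘ A`, for self-adjoint `A`, `C`
with `C` invertible (`Cinv` its two-sided inverse) and `W` any real subspace of `V`. -/
theorem stmt1 (A C Cinv : V →ₗ[ℂ] V)
    (hA : LinearMap.IsSymmetric A) (hC : LinearMap.IsSymmetric C)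
    (hCinv₁ : C ∘ₗ Cinv = LinearMap.id) (hCinv₂ : Cinv ∘ₗ C = LinearMap.id)
    (W : Submodule ℝ V) :
    gperp A (gperp C (gperp A (W : Set V))) = gperp (A ∘ₗ Cinv ∘ₗ A) (W : Set V) := by
  letI : InnerProductSpace ℝ V := InnerProductSpace.complexToReal
  haveI : FiniteDimensional ℝ V := FiniteDimensional.trans ℝ ℂ V
  -- the bridge: `gperp B ↑S = comap (B|ℝ) Sᗮ`
  have bridge : ∀ (B : V →ₗ[ℂ] V) (S : Submodule ℝ V),
      gperp B (S : Set V) = Sᗮ.comap (B.restrictScalars ℝ) := by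
    intro B S
    ext v
    change (∀ x ∈ S, (inner ℂ x (B v) : ℂ).re = 0) ↔ _
    simp only [Submodule.mem_comap, Submodule.mem_orthogonal, LinearMap.coe_restrictScalars]
    exact Iff.rfl
  have hAr : ∀ x y : V, ⟪(A.restrictScalars ℝ) x, y⟫ = ⟪x, (A.restrictScalars ℝ) y⟫ := by
    intro x y
    change (inner ℂ (A x) y : ℂ).re = (inner ℂ x (A y) : ℂ).re
    rw [hA]
  have hCr : ∀ x y : V, ⟪(C.restrictScalars ℝ) x, y⟫ = ⟪x, (C.restrictScalars ℝ) y⟫ := by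
    intro x y
    change (inner ℂ (C x) y : ℂ).re = (inner ℂ x (C y) : ℂ).re
    rw [hC]
  have hmapC : ∀ X : Submodule ℝ V,
      X.map (C.restrictScalars ℝ) = X.comap (Cinv.restrictScalars ℝ) := by
    intro X
    ext y
    simp only [Submodule.mem_map, Submodule.mem_comap, LinearMap.coe_restrictScalars]
    constructor
    · rintro ⟨x, hx, rfl⟩
      have : Cinv (C x) = x := congrFun (congrArg DFunLike.coe hCinv₂) x
      rwa [this]
    · intro h
      refine ⟨Cinv y, h, ?_⟩
      exact congrFun (congrArg DFunLike.coe hCinv₁) y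
  rw [bridge A W, bridge C, bridge A, bridge (A ∘ₗ Cinv ∘ₗ A) W]
  rw [orth_comap (A.restrictScalars ℝ) hAr, Submodule.orthogonal_orthogonal,
    orth_comap (C.restrictScalars ℝ) hCr, orth_map (A.restrictScalars ℝ) hAr, hmapC]
  rfl
end

section
/- Let V be a finite-dimensional complex inner product space with Hermitian inner product h, linear in the first argument; regard V also as a real vector space and let j denote multiplication by i. For a self-adjoint ℂ-linear endomorphism A of V let g_A(v,w) = Re h(Av,w) and X^{⊥,g_A} = {v ∈ V : g_A(v,x) = 0 for all x ∈ X} for a real subspace X; note g_{Id} = Re h. Let 𝒥 be a unital Jordan operator system on V, i.e. an ℝ-linear subspace of the ℂ-linear endomorphisms of V all of whose members are self-adjoint, containing the identity, and with A ∘ A ∈ 𝒥 whenever A ∈ 𝒥. Let W be a real subspace of V, and assume Im h(B s, s') = 0 for every B ∈ 𝒥 and all s, s' ∈ W^{⊥,Re h}. Then for every A ∈ 𝒥 and all v, w ∈ W^{⊥,g_A}, one has Im h(A v, w) = 0. -/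
variable {V : Type*} [NormedAddCommGroup V] [InnerProductSpace ℂ V] [FiniteDimensional ℂ V]

/-- A unital Jordan operator system on `V`: an ℝ-linear subspace of the ℂ-linear endomorphisms
of `V` all of whose members are self-adjoint, containing the identity, and closed under
squares. -/
structure IsJordanOperatorSystem (J : Set (V →ₗ[ℂ] V)) : Prop where
  symm_mem : ∀ A ∈ J, LinearMap.IsSymmetric A
  id_mem : LinearMap.id ∈ J
  sq_mem : ∀ A ∈ J, A ∘ₗ A ∈ J
  add_mem : ∀ A ∈ J, ∀ B ∈ J, A + B ∈ J
  smul_mem : ∀ (r : ℝ), ∀ A ∈ J, r • A ∈ J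

set_option linter.unusedSectionVars false

lemma jordan_mem {J : Set (V →ₗ[ℂ] V)} (hJ : IsJordanOperatorSystem J)
    {A B : V →ₗ[ℂ] V} (hA : A ∈ J) (hB : B ∈ J) : A * B + B * A ∈ J := by
  have h1 : (A + B) ∘ₗ (A + B) ∈ J := hJ.sq_mem _ (hJ.add_mem _ hA _ hB)
  have h2 := hJ.add_mem _ h1 _ (hJ.smul_mem (-1) _ (hJ.sq_mem _ hA))
  have h3 := hJ.add_mem _ h2 _ (hJ.smul_mem (-1) _ (hJ.sq_mem _ hB))
  convert h3 using 1
  simp only [← Module.End.mul_eq_comp, neg_one_smul]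
  noncomm_ring

lemma Jpow_mem {J : Set (V →ₗ[ℂ] V)} (hJ : IsJordanOperatorSystem J)
    {A : V →ₗ[ℂ] V} (hA : A ∈ J) : ∀ n : ℕ, A ^ n ∈ J := by
  intro n
  induction n with
  | zero => simpa [Module.End.one_eq_id] using hJ.id_mem
  | succ n ih =>
      have h1 := jordan_mem hJ ih hA
      have h2 := hJ.smul_mem (2⁻¹ : ℝ) _ h1
      convert h2 using 1
      rw [← pow_succ, ← pow_succ']
      rw [← two_smul ℝ (A ^ (n+1)), smul_smul]
      norm_num

lemma aeval_mem {J : Set (V →ₗ[ℂ] V)} (hJ : IsJordanOperatorSystem J)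
    {A : V →ₗ[ℂ] V} (hA : A ∈ J) (p : Polynomial ℝ) : Polynomial.aeval A p ∈ J := by
  induction p using Polynomial.induction_on' with
  | add p q hp hq => rw [map_add]; exact hJ.add_mem _ hp _ hq
  | monomial n c =>
      rw [Polynomial.aeval_monomial, Algebra.algebraMap_eq_smul_one, smul_mul_assoc, one_mul]
      exact hJ.smul_mem c _ (Jpow_mem hJ hA n)

lemma pow_eigen {A : V →ₗ[ℂ] V} {e : V} {μ : ℝ} (he : A e = (μ : ℂ) • e) :
    ∀ n : ℕ, (A ^ n) e = ((μ : ℂ) ^ n) • e := by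
  intro n
  induction n with
  | zero => simp
  | succ n ih =>
      rw [pow_succ', Module.End.mul_apply, ih, map_smul, he, smul_smul, pow_succ']
      ring_nf

lemma aeval_eigen {A : V →ₗ[ℂ] V} {e : V} {μ : ℝ} (he : A e = (μ : ℂ) • e)
    (p : Polynomial ℝ) : (Polynomial.aeval A p) e = ((p.eval μ : ℝ) : ℂ) • e := by
  induction p using Polynomial.induction_on' with
  | add p q hp hq =>
      rw [map_add, LinearMap.add_apply, hp, hq, Polynomial.eval_add, ← add_smul]
      push_cast
      ring_nf
  | monomial n c =>
      rw [Polynomial.aeval_monomial, Algebra.algebraMap_eq_smul_one, smul_mul_assoc, one_mul,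
        LinearMap.smul_apply, pow_eigen he, Polynomial.eval_monomial]
      rw [← Complex.coe_smul, smul_smul]
      push_cast
      ring_nf

lemma key_identity {A : V →ₗ[ℂ] V} (hsymm : A.IsSymmetric) :
    ∃ p : Polynomial ℝ, A ∘ₗ (Polynomial.aeval A p) ∘ₗ A = A := by
  classical
  set n := Module.finrank ℂ V with hn
  have hrank : Module.finrank ℂ V = n := rfl
  set b := hsymm.eigenvectorBasis hrank with hb
  set μ := hsymm.eigenvalues hrank with hμ
  set s : Finset ℝ := Finset.image μ Finset.univ with hs
  set f : ℝ → ℝ := fun x => if x = 0 then 0 else x⁻¹ with hf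
  refine ⟨Lagrange.interpolate s id f, ?_⟩
  set p := Lagrange.interpolate s id f with hp
  have hpval : ∀ i : Fin n, (μ i) * p.eval (μ i) * (μ i) = μ i := by
    intro i
    have hmem : μ i ∈ s := Finset.mem_image_of_mem μ (Finset.mem_univ i)
    have := Lagrange.eval_interpolate_at_node f (Set.injOn_id _) hmem
    simp only [id_eq] at this
    rw [← hp] at this
    rw [this, hf]
    by_cases h : μ i = 0
    · simp [h]
    · field_simp
      simp [h]
  apply b.toBasis.ext
  intro i
  have he : A (b i) = ((μ i : ℝ) : ℂ) • b i := hsymm.apply_eigenvectorBasis hrank i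
  rw [OrthonormalBasis.coe_toBasis, LinearMap.comp_apply, LinearMap.comp_apply, he,
    map_smul, aeval_eigen he, smul_smul, map_smul, he, smul_smul]
  congr 1
  norm_cast
  linear_combination hpval i

lemma mem_gperp {B : V →ₗ[ℂ] V} {X : Set V} {v : V} :
    v ∈ gperp B X ↔ ∀ x ∈ X, (inner ℂ x (B v) : ℂ).re = 0 := Iff.rfl


/-- Proposition 3.4 of the paper, operator form: if
`Im h(B s, s') = 0` for all `B ∈ 𝒥` and `s, s' ∈ W^{⊥, Re h}`, then for every `A ∈ 𝒥` and
all `v, w ∈ W^{⊥, g_A}`, one has `Im h(A v, w) = 0`; here `Im h(A v, w) = (inner w (A v)).im`. -/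
theorem stmt2 (J : Set (V →ₗ[ℂ] V)) (hJ : IsJordanOperatorSystem J)
    (W : Submodule ℝ V)
    (hS : ∀ B ∈ J, ∀ s ∈ gperp LinearMap.id (W : Set V),
      ∀ s' ∈ gperp LinearMap.id (W : Set V), (inner ℂ s' (B s) : ℂ).im = 0)
    (A : V →ₗ[ℂ] V) (hA : A ∈ J)
    (v w : V) (hv : v ∈ gperp A (W : Set V)) (hw : w ∈ gperp A (W : Set V)) :
    (inner ℂ w (A v) : ℂ).im = 0 := by
  classical
  have hsymm : A.IsSymmetric := hJ.symm_mem A hA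
  obtain ⟨p, hkey⟩ := key_identity hsymm
  set B := Polynomial.aeval A p with hBdef
  have hB : B ∈ J := aeval_mem hJ hA p
  have hAv : A v ∈ gperp LinearMap.id (W : Set V) := by
    rw [mem_gperp]
    intro x hx
    simpa using (mem_gperp.mp hv) x hx
  have hAw : A w ∈ gperp LinearMap.id (W : Set V) := by
    rw [mem_gperp]
    intro x hx
    simpa using (mem_gperp.mp hw) x hx
  have h0 := hS B hB (A v) hAv (A w) hAw
  have h1 : A v = A (B (A v)) := by
    conv_lhs => rw [← hkey]
    simp [LinearMap.comp_apply]
  rw [h1, ← hsymm w (B (A v))]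
  exact h0
end

section
/- Let V be a finite-dimensional complex inner product space with Hermitian inner product h, linear in the first argument; regard V as a real vector space and let j denote multiplication by i. Let 𝒥 be a unital Jordan operator system on V, i.e. an ℝ-linear subspace of the ℂ-linear endomorphisms of V all of whose members are self-adjoint, containing the identity, and with A ∘ A ∈ 𝒥 whenever A ∈ 𝒥. Let W be a real subspace of V, P := W ∩ jW, and S := (jW)^{⊥,Re h} (the orthogonal complement of jW with respect to Re h). Assume Im h(B s, s') = 0 for every B ∈ 𝒥 and all s, s' ∈ S. Let A ∈ 𝒥. If s₁, s₂ ∈ S and q ∈ P satisfy A(s₁ + i s₂ + q) = 0, then there exists q' ∈ P such that A(s₁ − i s₂ + q') = 0. -/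
variable {V : Type*} [NormedAddCommGroup V] [InnerProductSpace ℂ V] [FiniteDimensional ℂ V]

/-- Multiplication by `i` on `V`, seen as an ℝ-linear endomorphism `j`. -/
noncomputable def smulI : V →ₗ[ℝ] V where
  toFun v := Complex.I • v
  map_add' a b := smul_add _ a b
  map_smul' r v := by
    simp only [RingHom.id_apply]
    rw [smul_comm]

@[simp] lemma smulI_apply (v : V) : smulI v = Complex.I • v := rfl

lemma jos_sub_mem {J : Set (V →ₗ[ℂ] V)} (hJ : IsJordanOperatorSystem J)
    {B C : V →ₗ[ℂ] V} (hB : B ∈ J) (hC : C ∈ J) : B - C ∈ J := by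
  have := hJ.add_mem B hB _ (hJ.smul_mem (-1) C hC)
  simpa [sub_eq_add_neg, neg_one_smul] using this

lemma jos_mul_self_mem {J : Set (V →ₗ[ℂ] V)} (hJ : IsJordanOperatorSystem J)
    {B : V →ₗ[ℂ] V} (hB : B ∈ J) : B * B ∈ J := hJ.sq_mem B hB

lemma jos_pow_mem {J : Set (V →ₗ[ℂ] V)} (hJ : IsJordanOperatorSystem J)
    {A : V →ₗ[ℂ] V} (hA : A ∈ J) : ∀ k : ℕ, A ^ (k + 1) ∈ J := by
  intro k
  induction k with
  | zero => simpa [pow_one] using hA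
  | succ n ihn =>
    set B : V →ₗ[ℂ] V := A ^ (n + 1) with hB
    have hBJ : B ∈ J := ihn
    have hABmul : A * B = A ^ (n + 2) := by
      rw [hB, ← pow_succ']
    have hBAmul : B * A = A ^ (n + 2) := by
      rw [hB, ← pow_succ]
    have hkey : (A + B) * (A + B) - A * A - B * B = A ^ (n+2) + A ^ (n+2) := by
      rw [add_mul, mul_add, mul_add, hABmul, hBAmul]
      abel
    have hmem : (A + B) * (A + B) - A * A - B * B ∈ J :=
      jos_sub_mem hJ (jos_sub_mem hJ (jos_mul_self_mem hJ (hJ.add_mem _ hA _ hBJ))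
        (jos_mul_self_mem hJ hA)) (jos_mul_self_mem hJ hBJ)
    have hmem2 : ((1:ℝ)/2) • ((A + B) * (A + B) - A * A - B * B) ∈ J :=
      hJ.smul_mem _ _ hmem
    have heq : ((1:ℝ)/2) • ((A + B) * (A + B) - A * A - B * B) = A ^ (n + 2) := by
      rw [hkey, smul_add, ← two_smul ℝ (((1:ℝ)/2) • A ^ (n+2)), smul_smul]
      norm_num
    rwa [heq] at hmem2

lemma poly_reality {A : V →ₗ[ℂ] V} {s t : V}
    (him : ∀ k : ℕ, (inner ℂ t ((A ^ (k + 1)) s) : ℂ).im = 0) (p : Polynomial ℝ) :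
    (inner ℂ t ((A * Polynomial.aeval A (p.map (algebraMap ℝ ℂ))) s) : ℂ).im = 0 := by
  induction p using Polynomial.induction_on' with
  | add p q hp hq =>
    rw [Polynomial.map_add, map_add, mul_add, LinearMap.add_apply, inner_add_right,
      Complex.add_im, hp, hq, add_zero]
  | monomial n a =>
    rw [Polynomial.map_monomial, Polynomial.aeval_monomial]
    have : (A * ((algebraMap ℂ (V →ₗ[ℂ] V)) ((algebraMap ℝ ℂ) a) * A ^ n)) s
        = ((a : ℂ)) • ((A ^ (n+1)) s) := by
      rw [Module.End.mul_apply]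
      have h1 : ((algebraMap ℂ (V →ₗ[ℂ] V)) ((algebraMap ℝ ℂ) a) * A ^ n) s
          = ((a:ℂ)) • ((A ^ n) s) := by
        rw [Module.End.mul_apply, Module.algebraMap_end_apply]
        norm_num
      rw [h1, map_smul, pow_succ']
      rfl
    rw [this, inner_smul_right]
    rw [Complex.mul_im]
    simp [him n]

open Polynomial in
lemma exists_interp {A : V →ₗ[ℂ] V} (hA : A.IsSymmetric) :
    ∃ p : Polynomial ℝ, A = A * A * Polynomial.aeval A (p.map (algebraMap ℝ ℂ)) := by
  classical
  have hn : Module.finrank ℂ V = Module.finrank ℂ V := rfl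
  set b := hA.eigenvectorBasis hn with hb
  set μ := hA.eigenvalues hn with hμ
  set s : Finset ℝ := Finset.image μ Finset.univ with hs
  refine ⟨Lagrange.interpolate s id (fun x => x⁻¹), ?_⟩
  refine b.toBasis.ext fun i => ?_
  have hE := hA.hasEigenvector_eigenvectorBasis hn i
  have hbA : A (b i) = (μ i : ℂ) • b i := hA.apply_eigenvectorBasis hn i
  have haev : (Polynomial.aeval A ((Lagrange.interpolate s id (fun x => x⁻¹)).map (algebraMap ℝ ℂ)))
        (b i)
      = Polynomial.eval ((μ i : ℝ) : ℂ) ((Lagrange.interpolate s id (fun x => x⁻¹)).map (algebraMap ℝ ℂ)) • b i :=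
    Module.End.aeval_apply_of_hasEigenvector hE
  have heval : Polynomial.eval ((μ i : ℝ) : ℂ) ((Lagrange.interpolate s id (fun x => x⁻¹)).map (algebraMap ℝ ℂ))
      = (((μ i)⁻¹ : ℝ) : ℂ) := by
    rw [Polynomial.eval_map, ← Complex.coe_algebraMap, Polynomial.eval₂_at_apply]
    congr 1
    have hmem : μ i ∈ s := by simp [hs]
    have : Polynomial.eval (id (μ i)) (Lagrange.interpolate s id (fun x => x⁻¹)) = (fun x : ℝ => x⁻¹) (μ i) :=
      Lagrange.eval_interpolate_at_node (r := fun x => x⁻¹) (Set.injOn_id _) hmem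
    simpa using this
  have : (A * A * Polynomial.aeval A ((Lagrange.interpolate s id (fun x => x⁻¹)).map (algebraMap ℝ ℂ))) (b i)
      = (μ i : ℂ) • b i := by
    rw [Module.End.mul_apply, Module.End.mul_apply, haev, heval, map_smul, map_smul, hbA, map_smul, hbA]
    rw [smul_smul, smul_smul]
    congr 1
    rcases eq_or_ne (μ i) 0 with h0 | h0
    · simp [h0]
    · push_cast
      field_simp
  simp only [OrthonormalBasis.coe_toBasis]
  rw [this]
  exact hbA

lemma re_inner_I_smul_left (x y : V) :
    (inner ℂ (Complex.I • x) y : ℂ).re = (inner ℂ x y : ℂ).im := by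
  rw [inner_smul_left]
  simp [Complex.mul_re]

lemma cinner_eq_zero_of_re {x y : V} (h1 : (inner ℂ x y : ℂ).re = 0)
    (h2 : (inner ℂ (Complex.I • x) y : ℂ).re = 0) : (inner ℂ x y : ℂ) = 0 := by
  rw [re_inner_I_smul_left] at h2
  exact Complex.ext h1 h2

lemma mem_range_of_ker_orth {A : V →ₗ[ℂ] V} (hA : A.IsSymmetric) {w : V}
    (hw : ∀ z, A z = 0 → (inner ℂ z w : ℂ) = 0) : w ∈ LinearMap.range A := by
  have hle : LinearMap.range A ≤ (LinearMap.ker A)ᗮ := by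
    rintro _ ⟨v, rfl⟩
    intro z hz
    have hz' : A z = 0 := hz
    rw [← hA z v, hz', inner_zero_left]
  have heq : LinearMap.range A = (LinearMap.ker A)ᗮ := by
    apply Submodule.eq_of_le_of_finrank_le hle
    have h1 := Submodule.finrank_add_finrank_orthogonal (K := LinearMap.ker A)
    have h2 := LinearMap.finrank_range_add_finrank_ker A
    omega
  rw [heq]
  exact (Submodule.mem_orthogonal _ _).mpr fun z hz => hw z hz

/-- Lemma 4.7 of the paper, operator form: with `P = W ∩ jW` and
`S = (jW)^{⊥, Re h}`, assuming `Im h(B s, s') = 0` for every `B ∈ 𝒥` and all `s, s' ∈ S`,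
if `A ∈ 𝒥`, `s₁, s₂ ∈ S`, `q ∈ P` and `A (s₁ + i s₂ + q) = 0`, then some `q' ∈ P` satisfies
`A (s₁ - i s₂ + q') = 0`. -/
theorem stmt4 (J : Set (V →ₗ[ℂ] V)) (hJ : IsJordanOperatorSystem J)
    (W : Submodule ℝ V)
    (hS : ∀ B ∈ J, ∀ s ∈ gperp LinearMap.id ((W.map smulI : Submodule ℝ V) : Set V),
      ∀ s' ∈ gperp LinearMap.id ((W.map smulI : Submodule ℝ V) : Set V),
        (inner ℂ s' (B s) : ℂ).im = 0)
    (A : V →ₗ[ℂ] V) (hA : A ∈ J)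
    (s₁ s₂ : V)
    (hs₁ : s₁ ∈ gperp LinearMap.id ((W.map smulI : Submodule ℝ V) : Set V))
    (hs₂ : s₂ ∈ gperp LinearMap.id ((W.map smulI : Submodule ℝ V) : Set V))
    (q : V) (hq : q ∈ W ⊓ W.map smulI)
    (h : A (s₁ + Complex.I • s₂ + q) = 0) :
    ∃ q' ∈ W ⊓ W.map smulI, A (s₁ - Complex.I • s₂ + q') = 0 := by
  classical
  letI : InnerProductSpace ℝ V := InnerProductSpace.complexToReal
  set S : Submodule ℝ V := gperp LinearMap.id ((W.map smulI : Submodule ℝ V) : Set V) with hSdef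
  set Pr : Submodule ℝ V := W ⊓ W.map smulI with hPrdef
  have hsymm : A.IsSymmetric := hJ.symm_mem A hA
  have rinner : ∀ x y : V, (inner ℝ x y : ℝ) = (inner ℂ x y : ℂ).re := fun _ _ => rfl
  have memS : ∀ {s : V}, s ∈ S → ∀ x ∈ W.map smulI, (inner ℂ x s : ℂ).re = 0 := by
    intro s hs x hx
    have hs' : ∀ x ∈ ((W.map smulI : Submodule ℝ V) : Set V),
        (inner ℂ x (LinearMap.id s) : ℂ).re = 0 := hs
    simpa using hs' x hx
  have memS' : ∀ {s : V}, (∀ x ∈ W.map smulI, (inner ℂ x s : ℂ).re = 0) → s ∈ S := by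
    intro s hs
    show ∀ x ∈ ((W.map smulI : Submodule ℝ V) : Set V), (inner ℂ x (LinearMap.id s) : ℂ).re = 0
    intro x hx
    simpa using hs x hx
  -- Pr is closed under multiplication by I
  have hPrI : ∀ {p : V}, p ∈ Pr → Complex.I • p ∈ Pr := by
    intro p hp
    obtain ⟨hp1, hp2⟩ := Submodule.mem_inf.mp hp
    refine Submodule.mem_inf.mpr ⟨?_, Submodule.mem_map.mpr ⟨p, hp1, rfl⟩⟩
    obtain ⟨w, hw, rfl⟩ := Submodule.mem_map.mp hp2
    have hne : Complex.I • smulI w = -w := by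
      show Complex.I • (Complex.I • w) = -w
      rw [smul_smul, Complex.I_mul_I, neg_one_smul]
    rw [hne]
    exact W.neg_mem hw
  -- complex orthogonality between Pr and S
  have hPS : ∀ {p s : V}, p ∈ Pr → s ∈ S → (inner ℂ p s : ℂ) = 0 := by
    intro p s hp hs
    have h1 : (inner ℂ p s : ℂ).re = 0 := memS hs p (Submodule.mem_inf.mp hp).2
    have h2 : (inner ℂ (Complex.I • p) s : ℂ).re = 0 :=
      memS hs _ (Submodule.mem_inf.mp (hPrI hp)).2
    exact cinner_eq_zero_of_re h1 h2
  -- S is the real orthogonal complement of i W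
  have hSorth : S = (W.map smulI)ᗮ := by
    ext v
    rw [Submodule.mem_orthogonal]
    constructor
    · intro hv u hu
      rw [rinner]
      exact memS hv u hu
    · intro hv
      apply memS'
      intro x hx
      rw [← rinner]
      exact hv x hx
  -- decomposition of vectors complex-orthogonal to Pr
  have decomp : ∀ v : V, (∀ p ∈ Pr, (inner ℂ p v : ℂ) = 0) →
      ∃ x ∈ S, ∃ y ∈ S, v = x + Complex.I • y := by
    intro v hv
    obtain ⟨a, ha, b, hb, hab⟩ := (S ⊔ S.map smulI).exists_add_mem_mem_orthogonal v
    rw [Submodule.mem_orthogonal] at hb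
    have hbS : ∀ s ∈ S, (inner ℂ s b : ℂ) = 0 := by
      intro s hs
      have h1 : (inner ℂ s b : ℂ).re = 0 := by
        rw [← rinner]; exact hb s (Submodule.mem_sup_left hs)
      have h2 : (inner ℂ (Complex.I • s) b : ℂ).re = 0 := by
        rw [← rinner]
        exact hb _ (Submodule.mem_sup_right (Submodule.mem_map.mpr ⟨s, hs, rfl⟩))
      exact cinner_eq_zero_of_re h1 h2
    have hbP : b ∈ Pr := by
      have hbjW : b ∈ W.map smulI := by
        have hmem : b ∈ Sᗮ := (Submodule.mem_orthogonal _ _).mpr (fun s hs => by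
          rw [rinner, hbS s hs]; simp)
        rwa [hSorth, Submodule.orthogonal_orthogonal] at hmem
      have hIb : Complex.I • b ∈ W.map smulI := by
        have hmem : Complex.I • b ∈ Sᗮ := (Submodule.mem_orthogonal _ _).mpr (fun s hs => by
          rw [rinner, inner_smul_right, hbS s hs, mul_zero]; simp)
        rwa [hSorth, Submodule.orthogonal_orthogonal] at hmem
      obtain ⟨w, hw, hwb⟩ := Submodule.mem_map.mp hIb
      have hbw : b = w := by
        have hIw : Complex.I • w = Complex.I • b := hwb
        exact (smul_right_injective V Complex.I_ne_zero hIw).symm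
      exact Submodule.mem_inf.mpr ⟨hbw ▸ hw, hbjW⟩
    have hb0 : b = 0 := by
      have h1 : (inner ℂ b v : ℂ) = 0 := hv b hbP
      have h2 : (inner ℂ b a : ℂ) = 0 := by
        obtain ⟨x, hx, y, hy, hxy⟩ := Submodule.mem_sup.mp ha
        obtain ⟨τ, hτ, rfl⟩ := Submodule.mem_map.mp hy
        rw [← hxy, inner_add_right]
        have e1 : (inner ℂ b x : ℂ) = 0 := hPS hbP hx
        have e2 : (inner ℂ b (smulI τ) : ℂ) = 0 := by
          show (inner ℂ b (Complex.I • τ) : ℂ) = 0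
          rw [inner_smul_right, hPS hbP hτ, mul_zero]
        rw [e1, e2, add_zero]
      rw [hab, inner_add_right, h2, zero_add] at h1
      exact inner_self_eq_zero.mp h1
    obtain ⟨x, hx, y, hy, hxy⟩ := Submodule.mem_sup.mp ha
    obtain ⟨τ, hτ, rfl⟩ := Submodule.mem_map.mp hy
    refine ⟨x, hx, τ, hτ, ?_⟩
    rw [hab, hb0, add_zero, ← hxy]
    rfl
  -- the "projection onto the range" operator
  obtain ⟨pQ, hpQ⟩ := exists_interp hsymm
  set Qop : V →ₗ[ℂ] V := A * Polynomial.aeval A (pQ.map (algebraMap ℝ ℂ)) with hQop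
  have hAQ : A * Qop = A := by
    rw [hQop, ← mul_assoc]
    exact hpQ.symm
  have hAQs : ∀ v, A (Qop v) = A v := by
    intro v
    rw [← Module.End.mul_apply, hAQ]
  have hcomm : Polynomial.aeval A (pQ.map (algebraMap ℝ ℂ)) * A
      = A * Polynomial.aeval A (pQ.map (algebraMap ℝ ℂ)) := by
    calc Polynomial.aeval A (pQ.map (algebraMap ℝ ℂ)) * A
        = Polynomial.aeval A (pQ.map (algebraMap ℝ ℂ) * Polynomial.X) := by
          rw [map_mul, Polynomial.aeval_X]
      _ = Polynomial.aeval A (Polynomial.X * pQ.map (algebraMap ℝ ℂ)) := by rw [mul_comm]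
      _ = A * Polynomial.aeval A (pQ.map (algebraMap ℝ ℂ)) := by
          rw [map_mul, Polynomial.aeval_X]
  have hQfix : ∀ v, Qop (A v) = A v := by
    intro v
    have : Qop * A = A := by
      rw [hQop, mul_assoc, hcomm, ← mul_assoc]
      exact hpQ.symm
    rw [← Module.End.mul_apply, this]
  have hQrange : ∀ v, Qop v ∈ LinearMap.range A := fun v =>
    ⟨Polynomial.aeval A (pQ.map (algebraMap ℝ ℂ)) v, rfl⟩
  have hQim : ∀ s ∈ S, ∀ t ∈ S, (inner ℂ t (Qop s) : ℂ).im = 0 := by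
    intro s hsS t htS
    refine poly_reality (fun k => ?_) pQ
    exact hS (A ^ (k+1)) (jos_pow_mem hJ hA k) s hsS t htS
  have hid_im : ∀ s ∈ S, ∀ t ∈ S, (inner ℂ t s : ℂ).im = 0 := by
    intro s hsS t htS
    have := hS LinearMap.id hJ.id_mem s hsS t htS
    simpa using this
  -- Key claim
  have KC : ∀ x y : V, x ∈ S → y ∈ S → (x + Complex.I • y) ∈ LinearMap.range A →
      x ∈ LinearMap.range A ∧ y ∈ LinearMap.range A := by
    intro x y hx hy hxy
    obtain ⟨c, hc⟩ := hxy
    have hsub0 : ∀ v, A (v - Qop v) = 0 := fun v => by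
      rw [map_sub, hAQs, sub_self]
    have hker_orthQ : ∀ v d, (inner ℂ (Qop v) (d - Qop d) : ℂ) = 0 := by
      intro v d
      have e : (inner ℂ (Qop v) (d - Qop d) : ℂ)
          = inner ℂ (Polynomial.aeval A (pQ.map (algebraMap ℝ ℂ)) v) (A (d - Qop d)) := by
        rw [Module.End.mul_apply]
        exact hsymm _ _
      rw [e, hsub0, inner_zero_right]
    have hPxPy : (x - Qop x) + Complex.I • (y - Qop y) = 0 := by
      have e : x + Complex.I • y - Qop (x + Complex.I • y) = 0 := by
        rw [← hc, hQfix, hc, sub_self]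
      rw [map_add, map_smul] at e
      rw [← e, smul_sub]
      abel
    have hPx : x - Qop x = (-Complex.I) • (y - Qop y) := by
      have h' : x - Qop x = -(Complex.I • (y - Qop y)) := eq_neg_of_add_eq_zero_left hPxPy
      rw [h', ← neg_smul]
    have hr : (inner ℂ x (y - Qop y) : ℂ).im = 0 := by
      rw [inner_sub_right, Complex.sub_im, hid_im y hy x hx, hQim y hy x hx, sub_zero]
    have hinner_x_Px : (inner ℂ x (x - Qop x) : ℂ) = inner ℂ (x - Qop x) (x - Qop x) := by
      have hxd : (inner ℂ x (x - Qop x) : ℂ)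
          = inner ℂ (Qop x) (x - Qop x) + inner ℂ (x - Qop x) (x - Qop x) := by
        rw [← inner_add_left]
        congr 1
        abel
      rw [hxd, hker_orthQ x x, zero_add]
    have hPx0 : x - Qop x = 0 := by
      have h1 : (inner ℂ x (x - Qop x) : ℂ) = (-Complex.I) * inner ℂ x (y - Qop y) := by
        rw [hPx, inner_smul_right]
      have hre : (inner ℂ (x - Qop x) (x - Qop x) : ℂ).re = 0 := by
        rw [← hinner_x_Px, h1, Complex.mul_re]
        simp [hr, hid_im y hy x hx, hQim y hy x hx]
      have him0 : (inner ℂ (x - Qop x) (x - Qop x) : ℂ).im = 0 := by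
        have hcj := congrArg Complex.im
          (inner_conj_symm (𝕜 := ℂ) (x - Qop x) (x - Qop x))
        rw [Complex.conj_im] at hcj
        linarith
      exact inner_self_eq_zero.mp (Complex.ext hre him0)
    have hPy0 : y - Qop y = 0 := by
      have e : Complex.I • (y - Qop y) = 0 := by
        have := hPxPy
        rw [hPx0, zero_add] at this
        exact this
      have := smul_eq_zero.mp e
      rcases this with h' | h'
      · exact absurd h' Complex.I_ne_zero
      · exact h'
    constructor
    · have : x = Qop x := by
        have := sub_eq_zero.mp hPx0
        exact this
      rw [this]; exact hQrange x
    · have : y = Qop y := sub_eq_zero.mp hPy0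
      rw [this]; exact hQrange y
  -- orthogonality of s₁, s₂ against S ∩ range A
  have key : ∀ t, t ∈ S → t ∈ LinearMap.range A →
      (inner ℂ s₁ t : ℂ) = 0 ∧ (inner ℂ s₂ t : ℂ) = 0 := by
    rintro t ht ⟨v, rfl⟩
    have hAu : A (s₁ + Complex.I • s₂) = -(A q) := by
      have h' : A (s₁ + Complex.I • s₂) + A q = 0 := by rw [← map_add]; exact h
      exact eq_neg_of_add_eq_zero_left h'
    have h0 : (inner ℂ (s₁ + Complex.I • s₂) (A v) : ℂ) = 0 := by
      rw [← hsymm (s₁ + Complex.I • s₂) v, hAu, inner_neg_left, hsymm q v, hPS hq ht, neg_zero]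
    have e1 : (inner ℂ s₁ (A v) : ℂ).im = 0 := hid_im (A v) ht s₁ hs₁
    have e2 : (inner ℂ s₂ (A v) : ℂ).im = 0 := hid_im (A v) ht s₂ hs₂
    have hz : (inner ℂ s₁ (A v) : ℂ) + -Complex.I * (inner ℂ s₂ (A v) : ℂ) = 0 := by
      rw [← Complex.conj_I, ← inner_smul_left, ← inner_add_left]
      exact h0
    have hre := congrArg Complex.re hz
    have him := congrArg Complex.im hz
    simp only [Complex.add_re, Complex.add_im, Complex.mul_re, Complex.mul_im, Complex.neg_re,
      Complex.neg_im, Complex.I_re, Complex.I_im, e1, e2, Complex.zero_re, Complex.zero_im,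
      mul_zero, zero_mul, mul_one, one_mul, neg_zero, zero_add, add_zero, neg_neg, sub_zero,
      zero_sub] at hre him
    constructor
    · exact Complex.ext hre e1
    · refine Complex.ext ?_ e2
      simpa using him
  -- conclude
  set Kr : Submodule ℝ V := Pr ⊔ (LinearMap.ker A).restrictScalars ℝ with hKr
  have hu : s₁ - Complex.I • s₂ ∈ Kr := by
    rw [← Submodule.orthogonal_orthogonal Kr, Submodule.mem_orthogonal]
    intro w hw
    rw [Submodule.mem_orthogonal] at hw
    have hwP : ∀ p ∈ Pr, (inner ℂ p w : ℂ) = 0 := by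
      intro p hp
      apply cinner_eq_zero_of_re
      · rw [← rinner]; exact hw p (Submodule.mem_sup_left hp)
      · rw [← rinner]; exact hw _ (Submodule.mem_sup_left (hPrI hp))
    have hwK : ∀ z, A z = 0 → (inner ℂ z w : ℂ) = 0 := by
      intro z hz
      apply cinner_eq_zero_of_re
      · rw [← rinner]
        exact hw z (Submodule.mem_sup_right
          ((Submodule.restrictScalars_mem ℝ _ _).mpr (LinearMap.mem_ker.mpr hz)))
      · rw [← rinner]
        refine hw _ (Submodule.mem_sup_right ?_)
        have hIz : A (Complex.I • z) = 0 := by rw [map_smul, hz, smul_zero]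
        exact (Submodule.restrictScalars_mem ℝ _ _).mpr (LinearMap.mem_ker.mpr hIz)
    have hwrange : w ∈ LinearMap.range A := mem_range_of_ker_orth hsymm hwK
    obtain ⟨x, hx, y, hy, rfl⟩ := decomp w hwP
    obtain ⟨hxr, hyr⟩ := KC x y hx hy hwrange
    obtain ⟨hx1, hx2⟩ := key x hx hxr
    obtain ⟨hy1, hy2⟩ := key y hy hyr
    rw [rinner]
    have c1 : (inner ℂ x s₁ : ℂ) = 0 := by rw [← inner_conj_symm, hx1]; simp
    have c2 : (inner ℂ x s₂ : ℂ) = 0 := by rw [← inner_conj_symm, hx2]; simp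
    have c3 : (inner ℂ y s₁ : ℂ) = 0 := by rw [← inner_conj_symm, hy1]; simp
    have c4 : (inner ℂ y s₂ : ℂ) = 0 := by rw [← inner_conj_symm, hy2]; simp
    have hz : (inner ℂ (x + Complex.I • y) (s₁ - Complex.I • s₂) : ℂ) = 0 := by
      rw [inner_add_left, inner_smul_left, inner_sub_right, inner_sub_right,
        inner_smul_right, inner_smul_right, c1, c2, c3, c4]
      ring
    rw [hz]
    simp
  obtain ⟨pp, hpp, z, hz, hsum⟩ := Submodule.mem_sup.mp hu
  refine ⟨-pp, Submodule.neg_mem _ hpp, ?_⟩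
  have hz' : A z = 0 := LinearMap.mem_ker.mp ((Submodule.restrictScalars_mem ℝ _ _).mp hz)
  have e : s₁ - Complex.I • s₂ + -pp = z := by rw [← hsum]; abel
  rw [e, hz']
end

section
/- Let V be a finite-dimensional complex inner product space with Hermitian inner product h, linear in the first argument; regard V as a real vector space and let j denote multiplication by i. For a self-adjoint ℂ-linear endomorphism A of V let g_A(v,w) = Re h(Av,w), and for a real subspace X let X^{⊥,g_A} = {v ∈ V : g_A(v,x) = 0 for all x ∈ X}. Let 𝒥 be a unital Jordan operator system on V, i.e. an ℝ-linear subspace of the ℂ-linear endomorphisms of V all of whose members are self-adjoint, containing the identity, and with A ∘ A ∈ 𝒥 whenever A ∈ 𝒥. Let W be a real subspace of V. Assume that for every positive-definite A ∈ 𝒥 (i.e. h(Av,v) > 0 for all v ≠ 0) one has j(W^{⊥,g_A}) ⊆ W. Then Im h(B s, s') = 0 for every B ∈ 𝒥 and all s, s' ∈ (jW)^{⊥,Re h}. -/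
open ComplexOrder

variable {V : Type*} [NormedAddCommGroup V] [InnerProductSpace ℂ V] [FiniteDimensional ℂ V]

/-- membership in `(jW)^{⊥,Re h}` means `Im ⟪w, v⟫ = 0` for all `w ∈ W`. -/
lemma mem_gperp_id_iff (W : Submodule ℝ V) (v : V) :
    v ∈ gperp LinearMap.id ((W.map smulI : Submodule ℝ V) : Set V) ↔
      ∀ w ∈ W, (inner ℂ w v : ℂ).im = 0 := by
  constructor
  · intro h w hw
    have := h (Complex.I • w) ⟨w, hw, rfl⟩
    rw [LinearMap.id_apply, inner_smul_left] at this
    simp only [Complex.conj_I, neg_mul, Complex.neg_re, Complex.mul_re, Complex.I_re,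
      Complex.I_im, zero_mul, one_mul, zero_sub, neg_neg] at this
    exact this
  · rintro h x ⟨w, hw, rfl⟩
    have := h w hw
    show (inner ℂ (Complex.I • w) ((LinearMap.id : V →ₗ[ℂ] V) v) : ℂ).re = 0
    rw [LinearMap.id_apply, inner_smul_left]
    simp only [Complex.conj_I, neg_mul, Complex.neg_re, Complex.mul_re, Complex.I_re,
      Complex.I_im, zero_mul, one_mul, zero_sub, neg_neg, this]

/-- key step of Theorems 5.3 and 6.1 of the paper, operator form: if for every
positive-definite `A ∈ 𝒥` (i.e. `h(A v, v) > 0` for `v ≠ 0`, with `h(A v, v) = inner v (A v)`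
a positive real, using the complex order) one has `j (W^{⊥, g_A}) ⊆ W`, then
`Im h(B s, s') = 0` for every `B ∈ 𝒥` and all `s, s' ∈ (jW)^{⊥, Re h}`. -/
theorem stmt8 (J : Set (V →ₗ[ℂ] V)) (hJ : IsJordanOperatorSystem J)
    (W : Submodule ℝ V)
    (hpos : ∀ A ∈ J, (∀ v : V, v ≠ 0 → 0 < (inner ℂ v (A v) : ℂ)) →
      ∀ v ∈ gperp A (W : Set V), Complex.I • v ∈ W)
    (B : V →ₗ[ℂ] V) (hB : B ∈ J)
    (s : V) (hs : s ∈ gperp LinearMap.id ((W.map smulI : Submodule ℝ V) : Set V))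
    (s' : V) (hs' : s' ∈ gperp LinearMap.id ((W.map smulI : Submodule ℝ V) : Set V)) :
    (inner ℂ s' (B s) : ℂ).im = 0 := by
  rw [mem_gperp_id_iff] at hs hs'
  -- Key lemma: if `A ∈ J` is positive definite and `A u ∈ (jW)^{⊥,Re h}`-like
  -- (i.e. `Im ⟪w, A u⟫ = 0` for all `w ∈ W`), then `u ∈ W`.
  have keyW : ∀ A ∈ J, (∀ v : V, v ≠ 0 → 0 < (inner ℂ v (A v) : ℂ)) →
      ∀ u : V, (∀ w ∈ W, (inner ℂ w (A u) : ℂ).im = 0) → u ∈ W := by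
    intro A hA hApos u hu
    have hv : (Complex.I • u) ∈ gperp A (W : Set V) := by
      intro w hw
      rw [map_smul, inner_smul_right]
      simp only [Complex.mul_re, Complex.I_re, Complex.I_im, zero_mul, one_mul, zero_sub,
        hu w hw, neg_zero]
    have h2 := hpos A hA hApos _ hv
    rw [smul_smul, Complex.I_mul_I, neg_one_smul] at h2
    exact (neg_mem_iff).mp h2
  -- the identity is positive definite
  have hid : ∀ v : V, v ≠ 0 → 0 < (inner ℂ v ((LinearMap.id : V →ₗ[ℂ] V) v) : ℂ) := by
    intro v hv
    have hv0 : 0 < ‖v‖ := norm_pos_iff.mpr hv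
    rw [LinearMap.id_apply, inner_self_eq_norm_sq_to_K]
    have h2 : (0:ℝ) < ‖v‖ ^ 2 := by positivity
    have h3 : (0:ℂ) < ((‖v‖ ^ 2 : ℝ) : ℂ) := Complex.zero_lt_real.mpr h2
    convert h3 using 2
    norm_cast
  -- hence `s, s' ∈ W` (not needed for s', but s is)
  have hsW : s ∈ W := keyW _ hJ.id_mem hid s (by simpa using hs)
  -- operator norm bound
  set C : ℝ := ‖LinearMap.toContinuousLinearMap B‖ with hC
  have hC0 : 0 ≤ C := norm_nonneg _
  have hBle : ∀ v : V, ‖B v‖ ≤ C * ‖v‖ := fun v =>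
    (LinearMap.toContinuousLinearMap B).le_opNorm v
  -- ⟪v, B v⟫ is real
  have hBreal : ∀ v : V, (inner ℂ v (B v) : ℂ).im = 0 := by
    intro v
    have h1 : (starRingEnd ℂ) (inner ℂ v (B v)) = inner ℂ v (B v) := by
      rw [inner_conj_symm, hJ.symm_mem B hB v v]
    have := congrArg Complex.im h1
    simp only [Complex.conj_im] at this
    linarith
  set ε : ℝ := 1 / (2 * (C + 1)) with hε
  have hε0 : 0 < ε := by positivity
  -- main estimate: for all t ∈ (0, ε], |Im ⟪B s, s'⟫| ≤ t * (C^2 * (2*‖s‖) * ‖s'‖)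
  have main : ∀ t : ℝ, 0 < t → t ≤ ε →
      |(inner ℂ (B s) s' : ℂ).im| ≤ t * (C ^ 2 * (2 * ‖s‖) * ‖s'‖) := by
    intro t ht htε
    have htC : t * C < 1 / 2 := by
      have : t * (2 * (C + 1)) ≤ 1 := by
        rw [hε, le_div_iff₀ (by positivity)] at htε
        linarith
      nlinarith
    -- A_t = id + t • B
    set A : V →ₗ[ℂ] V := LinearMap.id + t • B with hA
    have hAJ : A ∈ J := hJ.add_mem _ hJ.id_mem _ (hJ.smul_mem t B hB)
    have hAapp : ∀ v : V, A v = v + (t : ℂ) • B v := by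
      intro v
      rw [hA, LinearMap.add_apply, LinearMap.id_apply, LinearMap.smul_apply, Complex.coe_smul]
    -- ⟪v, A v⟫ = ‖v‖² + t * ⟪v, B v⟫
    have hinnerA : ∀ v : V,
        (inner ℂ v (A v) : ℂ) = ((‖v‖^2 : ℝ) : ℂ) + (t:ℂ) * inner ℂ v (B v) := by
      intro v
      rw [hAapp, inner_add_right, inner_smul_right, inner_self_eq_norm_sq_to_K]
      norm_cast
    -- positive definiteness
    have hApos : ∀ v : V, v ≠ 0 → 0 < (inner ℂ v (A v) : ℂ) := by
      intro v hv
      rw [hinnerA, Complex.lt_def]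
      have him : (inner ℂ v (B v) : ℂ).im = 0 := hBreal v
      have habs : |(inner ℂ v (B v) : ℂ).re| ≤ C * ‖v‖ * ‖v‖ := by
        calc |(inner ℂ v (B v) : ℂ).re| ≤ ‖(inner ℂ v (B v) : ℂ)‖ := Complex.abs_re_le_norm _
          _ ≤ ‖v‖ * ‖B v‖ := norm_inner_le_norm _ _
          _ ≤ ‖v‖ * (C * ‖v‖) := by
              have := hBle v
              nlinarith [norm_nonneg v]
          _ = C * ‖v‖ * ‖v‖ := by ring
      have hv0 : 0 < ‖v‖ := norm_pos_iff.mpr hv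
      rw [abs_le] at habs
      constructor
      · simp only [Complex.add_re, Complex.mul_re, Complex.ofReal_re, Complex.ofReal_im,
          Complex.zero_re, him, mul_zero, zero_mul, sub_zero]
        nlinarith [mul_pos hv0 hv0, mul_nonneg ht.le
          (by nlinarith : (0:ℝ) ≤ (inner ℂ v (B v) : ℂ).re + C * ‖v‖ * ‖v‖),
          mul_nonneg (mul_nonneg ht.le hC0) (mul_pos hv0 hv0).le]
      · simp only [Complex.add_im, Complex.mul_im, Complex.ofReal_re, Complex.ofReal_im,
          Complex.zero_im, him, mul_zero, zero_mul, add_zero]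
    -- A is injective hence surjective
    have hAinj : Function.Injective A := by
      intro a b hab
      by_contra hne
      have h0 : a - b ≠ 0 := sub_ne_zero.mpr hne
      have := hApos _ h0
      rw [map_sub, hab, sub_self, inner_zero_right] at this
      exact lt_irrefl _ this
    obtain ⟨u, hu⟩ := (LinearMap.injective_iff_surjective.mp hAinj) s
    -- u ∈ W
    have huW : u ∈ W := keyW A hAJ hApos u (by rw [hu]; exact hs)
    -- norm bound on u
    have hunorm : ‖u‖ ≤ 2 * ‖s‖ := by
      have h1 : s = u + (t : ℂ) • B u := by rw [← hu, hAapp]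
      have h2 : ‖u‖ ≤ ‖s‖ + t * ‖B u‖ := by
        have : u = s - (t : ℂ) • B u := by rw [h1]; abel
        calc ‖u‖ = ‖s - (t : ℂ) • B u‖ := by rw [← this]
          _ ≤ ‖s‖ + ‖(t : ℂ) • B u‖ := norm_sub_le _ _
          _ = ‖s‖ + |t| * ‖B u‖ := by rw [norm_smul]; simp
          _ = ‖s‖ + t * ‖B u‖ := by rw [abs_of_pos ht]
      have h3 : t * ‖B u‖ ≤ t * (C * ‖u‖) := by
        have := hBle u
        nlinarith
      nlinarith [hBle u, norm_nonneg u]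
    -- Im ⟪u, s'⟫ = 0 and Im ⟪s, s'⟫ = 0
    have h4 : (inner ℂ u s' : ℂ).im = 0 := hs' u huW
    have h5 : (inner ℂ s s' : ℂ).im = 0 := hs' s hsW
    -- t * Im ⟪B u, s'⟫ = Im ⟪s, s'⟫ - Im ⟪u, s'⟫ = 0
    have h6 : (inner ℂ (B u) s' : ℂ).im = 0 := by
      have h1 : s = u + (t : ℂ) • B u := by rw [← hu, hAapp]
      have h7 : (inner ℂ s s' : ℂ) = inner ℂ u s' + (t:ℂ) * inner ℂ (B u) s' := by
        rw [h1, inner_add_left, inner_smul_left]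
        norm_num
      have h8 := congrArg Complex.im h7
      simp only [Complex.add_im, Complex.mul_im, Complex.ofReal_re, Complex.ofReal_im,
        h4, h5, zero_mul, zero_add, add_zero, zero_mul] at h8
      have : t * (inner ℂ (B u) s' : ℂ).im = 0 := by linarith
      rcases mul_eq_zero.mp this with h | h
      · exact absurd h (ne_of_gt ht)
      · exact h
    -- B s = B u + t • B (B u)
    have h9 : (inner ℂ (B s) s' : ℂ).im = t * (inner ℂ (B (B u)) s' : ℂ).im := by
      have h1 : s = u + (t : ℂ) • B u := by rw [← hu, hAapp]
      have h10 : B s = B u + (t : ℂ) • B (B u) := by rw [h1, map_add, map_smul]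
      have h11 : (inner ℂ (B s) s' : ℂ) = inner ℂ (B u) s' + (t:ℂ) * inner ℂ (B (B u)) s' := by
        rw [h10, inner_add_left, inner_smul_left]
        norm_num
      have h12 := congrArg Complex.im h11
      simp only [Complex.add_im, Complex.mul_im, Complex.ofReal_re, Complex.ofReal_im,
        h6, zero_add, zero_mul, add_zero] at h12
      exact h12
    rw [h9, abs_mul, abs_of_pos ht]
    have h13 : |(inner ℂ (B (B u)) s' : ℂ).im| ≤ C ^ 2 * (2 * ‖s‖) * ‖s'‖ := by
      calc |(inner ℂ (B (B u)) s' : ℂ).im| ≤ ‖(inner ℂ (B (B u)) s' : ℂ)‖ := Complex.abs_im_le_norm _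
        _ ≤ ‖B (B u)‖ * ‖s'‖ := norm_inner_le_norm _ _
        _ ≤ C ^ 2 * (2 * ‖s‖) * ‖s'‖ := by
            have h14 : ‖B (B u)‖ ≤ C * ‖B u‖ := hBle _
            have h15 : ‖B u‖ ≤ C * ‖u‖ := hBle u
            have hBBu : ‖B (B u)‖ ≤ C ^ 2 * (2 * ‖s‖) := by
              nlinarith [mul_le_mul_of_nonneg_left h15 hC0,
                mul_le_mul_of_nonneg_left hunorm (mul_nonneg hC0 hC0), sq_nonneg C]
            exact mul_le_mul_of_nonneg_right hBBu (norm_nonneg s')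
    nlinarith
  -- conclude Im ⟪B s, s'⟫ = 0
  have hfin : (inner ℂ (B s) s' : ℂ).im = 0 := by
    set K : ℝ := C ^ 2 * (2 * ‖s‖) * ‖s'‖ with hK
    have hK0 : 0 ≤ K := by positivity
    by_contra h
    have hx : 0 < |(inner ℂ (B s) s' : ℂ).im| := abs_pos.mpr h
    set x := |(inner ℂ (B s) s' : ℂ).im| with hxdef
    set t : ℝ := min ε (x / (2 * (K + 1))) with htdef
    have ht0 : 0 < t := lt_min hε0 (by positivity)
    have htε : t ≤ ε := min_le_left _ _
    have h1 := main t ht0 htε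
    have h2 : t ≤ x / (2 * (K + 1)) := min_le_right _ _
    have h3 : t * K ≤ x / (2 * (K + 1)) * K := by nlinarith
    have h4 : x / (2 * (K + 1)) * K < x := by
      rw [div_mul_eq_mul_div, div_lt_iff₀ (by positivity)]
      nlinarith
    linarith
  -- ⟪s', B s⟫ = conj ⟪B s, s'⟫
  have : (inner ℂ s' (B s) : ℂ) = (starRingEnd ℂ) (inner ℂ (B s) s') := (inner_conj_symm _ _).symm
  rw [this, Complex.conj_im, hfin, neg_zero]
end

section
/- Let U be a finite-dimensional real vector space equipped with a commutative bilinear product (a,b) ↦ ab; write T_a for the left multiplication operator T_a b = ab, and assume the linearized Jordan identity [T_a, T_{bc}] + [T_b, T_{ca}] + [T_c, T_{ab}] = 0 for all a, b, c ∈ U. Let e₁, y, x₁, x₀ ∈ U satisfy e₁e₁ = e₁, e₁y = (1/2)y, e₁x₁ = x₁, and e₁x₀ = 0. Set L := T_y + 2[T_{e₁}, T_y]. Then L x₁ = 0, L³ x₀ = 0, and exp(L)(x₁ + x₀) = (x₁ + 2 T_{e₁}(T_y)² x₀) + 2 T_y x₀ + x₀, where exp denotes the exponential of the linear endomorphism L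 of U. -/
/-- Lemma 5.1 of the paper: in a (finite-dimensional, normed so that the
exponential makes sense) real vector space `U` with a commutative bilinear product satisfying
the linearized Jordan identity, for `e₁, y, x₁, x₀` with `e₁e₁ = e₁`, `e₁y = (1/2)y`,
`e₁x₁ = x₁`, `e₁x₀ = 0`, the operator `L := T_y + 2[T_{e₁}, T_y]` kills `x₁`, is cubically
nilpotent on `x₀`, and satisfies
`exp(L)(x₁ + x₀) = (x₁ + 2 T_{e₁}(T_y)² x₀) + 2 T_y x₀ + x₀`. -/
theorem stmt10 {U : Type*} [NormedAddCommGroup U] [NormedSpace ℝ U] [FiniteDimensional ℝ U]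
    (mul : U →ₗ[ℝ] U →ₗ[ℝ] U)
    (hcomm : ∀ a b : U, mul a b = mul b a)
    (hjordan : ∀ a b c : U,
      (mul a ∘ₗ mul (mul b c) - mul (mul b c) ∘ₗ mul a)
        + (mul b ∘ₗ mul (mul c a) - mul (mul c a) ∘ₗ mul b)
        + (mul c ∘ₗ mul (mul a b) - mul (mul a b) ∘ₗ mul c) = 0)
    (e₁ y x₁ x₀ : U)
    (he₁ : mul e₁ e₁ = e₁) (hy : mul e₁ y = (1 / 2 : ℝ) • y)
    (hx₁ : mul e₁ x₁ = x₁) (hx₀ : mul e₁ x₀ = 0)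
    (L : U →ₗ[ℝ] U)
    (hL : L = mul y + (2 : ℝ) • (mul e₁ ∘ₗ mul y - mul y ∘ₗ mul e₁)) :
    L x₁ = 0 ∧ (L ∘ₗ L ∘ₗ L) x₀ = 0 ∧
      NormedSpace.exp (LinearMap.toContinuousLinearMap L) (x₁ + x₀) =
        (x₁ + (2 : ℝ) • mul e₁ (mul y (mul y x₀))) + (2 : ℝ) • mul y x₀ + x₀ := by
  -- evaluated linearized Jordan identity
  have hj : ∀ a b c v : U,
      (mul a (mul (mul b c) v) - mul (mul b c) (mul a v))
        + (mul b (mul (mul c a) v) - mul (mul c a) (mul b v))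
        + (mul c (mul (mul a b) v) - mul (mul a b) (mul c v)) = 0 := by
    intro a b c v
    have h := LinearMap.congr_fun (hjordan a b c) v
    simpa using h
  -- the fundamental Peirce relation (evaluated form)
  have hstar : ∀ z v : U,
      (2 : ℝ) • (mul e₁ (mul (mul e₁ z) v) - mul (mul e₁ z) (mul e₁ v))
        + (mul z (mul e₁ v) - mul e₁ (mul z v)) = 0 := by
    intro z v
    have h := hj e₁ e₁ z v
    rw [hcomm z e₁, he₁] at h
    linear_combination (norm := module) h
  have hA : ∀ u : U, mul e₁ u = u → mul e₁ (mul y u) = (1 / 2 : ℝ) • mul y u := by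
    intro u hu
    have h := hstar u y
    simp only [hu, hy, map_smul, hcomm u y] at h
    linear_combination (norm := module) h
  have hB : ∀ u : U, mul e₁ u = 0 → mul e₁ (mul y u) = (1 / 2 : ℝ) • mul y u := by
    intro u hu
    have h := hstar u y
    simp only [hu, hy, map_zero, LinearMap.zero_apply, map_smul, smul_zero,
      hcomm u y, sub_self, smul_zero, zero_add] at h
    linear_combination (norm := module) -h
  have hq2 : mul e₁ (mul y x₀) = (1 / 2 : ℝ) • mul y x₀ := hB x₀ hx₀
  -- e₁ ((y y) x₀) = 0
  have hkey0 : mul e₁ (mul (mul y y) x₀) = 0 := by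
    have h := hj y y e₁ x₀
    simp only [hcomm y e₁, hy, map_smul, LinearMap.smul_apply, hx₀, map_zero,
      smul_zero] at h
    linear_combination (norm := module) h
  -- Peirce relation for p = y (y x₀) : e₁ p = p - (1/2) (y y) x₀
  have hTp : mul e₁ (mul y (mul y x₀))
      = mul y (mul y x₀) - (1 / 2 : ℝ) • mul (mul y y) x₀ := by
    have h := hj e₁ y x₀ y
    simp only [hy, hcomm x₀ e₁, hx₀, map_zero, LinearMap.zero_apply, map_smul,
      LinearMap.smul_apply, smul_zero, hcomm (mul y x₀) y, hcomm x₀ (mul y y),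
      hcomm x₀ y] at h
    linear_combination (norm := module) h
  have hTTp : mul e₁ (mul e₁ (mul y (mul y x₀))) = mul e₁ (mul y (mul y x₀)) := by
    rw [hTp, map_sub, map_smul, hkey0, smul_zero, sub_zero, hTp]
  -- action of L
  have hLx₁ : L x₁ = 0 := by
    have h := hA x₁ hx₁
    rw [hL]
    simp only [LinearMap.add_apply, LinearMap.smul_apply, LinearMap.sub_apply,
      LinearMap.comp_apply, hx₁, h]
    module
  have hLx₀ : L x₀ = (2 : ℝ) • mul y x₀ := by
    rw [hL]
    simp only [LinearMap.add_apply, LinearMap.smul_apply, LinearMap.sub_apply,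
      LinearMap.comp_apply, hx₀, map_zero, hq2]
    module
  have hLq : L (mul y x₀) = (2 : ℝ) • mul e₁ (mul y (mul y x₀)) := by
    rw [hL]
    simp only [LinearMap.add_apply, LinearMap.smul_apply, LinearMap.sub_apply,
      LinearMap.comp_apply, hq2, map_smul]
    module
  have hLTp : L (mul e₁ (mul y (mul y x₀))) = 0 := by
    have h := hA _ hTTp
    rw [hL]
    simp only [LinearMap.add_apply, LinearMap.smul_apply, LinearMap.sub_apply,
      LinearMap.comp_apply, hTTp, h]
    module
  have hL2x₀ : L (L x₀) = (4 : ℝ) • mul e₁ (mul y (mul y x₀)) := by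
    rw [hLx₀, map_smul, hLq]; module
  have hL3x₀ : L (L (L x₀)) = 0 := by
    rw [hL2x₀, map_smul, hLTp, smul_zero]
  refine ⟨hLx₁, by simpa using hL3x₀, ?_⟩
  -- the exponential
  set M : U →L[ℝ] U := LinearMap.toContinuousLinearMap L with hM
  have hMcoe : ∀ v : U, M v = L v := fun v => by
    rw [hM, LinearMap.coe_toContinuousLinearMap']
  have happ : ∀ v : U, NormedSpace.exp M v
      = ∑' n : ℕ, ((n.factorial : ℝ)⁻¹ • ((M ^ n) v)) := by
    intro v
    rw [NormedSpace.exp_eq_tsum (𝕂 := ℝ)]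
    have hsum := NormedSpace.expSeries_summable' (𝕂 := ℝ) M
    have := (ContinuousLinearMap.apply ℝ U v).map_tsum hsum
    simpa using this
  have hMx₁ : ∀ n : ℕ, (M ^ (n + 1)) x₁ = 0 := by
    intro n
    rw [pow_succ, ContinuousLinearMap.mul_apply, hMcoe, hLx₁, map_zero]
  have hM3x₀ : (M ^ 3) x₀ = 0 := by
    have h3 : (M ^ 3) x₀ = M (M (M x₀)) := by
      rw [pow_succ, pow_succ, pow_one, ContinuousLinearMap.mul_apply,
        ContinuousLinearMap.mul_apply]
    rw [h3, hMcoe, hMcoe, hMcoe, hL3x₀]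
  have hMx₀ : ∀ n : ℕ, 3 ≤ n → (M ^ n) x₀ = 0 := by
    intro n hn
    obtain ⟨k, rfl⟩ := Nat.exists_eq_add_of_le' hn
    rw [pow_add, ContinuousLinearMap.mul_apply, hM3x₀, map_zero]
  have hexp₁ : NormedSpace.exp M x₁ = x₁ := by
    rw [happ x₁, tsum_eq_sum (s := {0}) (by
      intro n hn
      match n, hn with
      | n + 1, _ => rw [hMx₁ n, smul_zero])]
    simp
  have hexp₀ : NormedSpace.exp M x₀
      = x₀ + (2 : ℝ) • mul y x₀ + (2 : ℝ) • mul e₁ (mul y (mul y x₀)) := by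
    rw [happ x₀, tsum_eq_sum (s := Finset.range 3) (by
      intro n hn
      rw [hMx₀ n (by simpa using hn), smul_zero])]
    rw [Finset.sum_range_succ, Finset.sum_range_succ, Finset.sum_range_one]
    have h1 : (M ^ 1) x₀ = (2 : ℝ) • mul y x₀ := by rw [pow_one, hMcoe, hLx₀]
    have h2 : (M ^ 2) x₀ = (4 : ℝ) • mul e₁ (mul y (mul y x₀)) := by
      rw [pow_two, ContinuousLinearMap.mul_apply, hMcoe, hMcoe, hL2x₀]
    rw [h1, h2, pow_zero]
    norm_num [Nat.factorial]
    module
  rw [map_add, hexp₁, hexp₀]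
  module
end

section
/- Let U be a real vector space with a commutative bilinear product and a unit element e (so ex = x for all x ∈ U). Let V be a finite-dimensional complex inner product space with Hermitian inner product h, linear in the first argument, and let R : U → End_ℂ(V) be an ℝ-linear map such that every R_x is self-adjoint with respect to h, R_e = (1/2)·Id, and R_{xy} = R_x R_y + R_y R_x for all x, y ∈ U. Let e₁ ∈ U satisfy e₁e₁ = e₁ and let y ∈ U satisfy e₁y = (1/2)y; set e' := e − e₁ and B := R_y + 2(R_y R_{e₁} − R_{e₁} R_y). Then: (1) B ∘ R_{e'} = 0, and consequently exp(B) v = v for every v in the range of R_{e'}; (2) B* ∘ R_{e₁} = 0, and consequently exp(B*) v = v for every v in the range of R_{e₁}; (3) R_{e₁} ∘ B = 0, and consequently R_{e₁} ∘ exp(B) = R_{e₁}, where B* denotes the Hermitian adjoint and exp the exponential of a linear endomorphism. -/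
section Helpers

variable {V : Type*} [NormedAddCommGroup V] [InnerProductSpace ℂ V] [FiniteDimensional ℂ V]

private theorem stmt11.exp_apply_tsum (f : V →L[ℂ] V) (v : V) :
    NormedSpace.exp f v = ∑' n : ℕ, ((n.factorial : ℂ)⁻¹) • (f ^ n) v := by
  rw [NormedSpace.exp_eq_tsum (𝕂 := ℂ)]
  have hs : Summable (fun n : ℕ => ((n.factorial : ℂ)⁻¹) • f ^ n) :=
    NormedSpace.expSeries_summable' f
  have := (ContinuousLinearMap.apply ℂ V v).map_tsum hs
  simpa only [ContinuousLinearMap.apply_apply, ContinuousLinearMap.smul_apply] using this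

private theorem stmt11.exp_fix (f : V →L[ℂ] V) (v : V) (hv : f v = 0) :
    NormedSpace.exp f v = v := by
  rw [stmt11.exp_apply_tsum]
  rw [tsum_eq_single 0 (by
    intro n hn
    obtain ⟨m, rfl⟩ := Nat.exists_eq_succ_of_ne_zero hn
    rw [pow_succ]
    simp [hv])]
  simp

private theorem stmt11.comp_exp_fix (g : V →ₗ[ℂ] V) (f : V →L[ℂ] V)
    (hgf : ∀ w, g (f w) = 0) (v : V) :
    g (NormedSpace.exp f v) = g v := by
  rw [stmt11.exp_apply_tsum]
  have hs : Summable (fun n : ℕ => ((n.factorial : ℂ)⁻¹) • (f ^ n) v) := by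
    have hs0 : Summable (fun n : ℕ => ((n.factorial : ℂ)⁻¹) • f ^ n) :=
      NormedSpace.expSeries_summable' f
    have := (ContinuousLinearMap.apply ℂ V v).summable
      (f := fun n : ℕ => ((n.factorial : ℂ)⁻¹) • f ^ n) hs0
    simpa only [ContinuousLinearMap.apply_apply, ContinuousLinearMap.smul_apply] using this
  have hcont := (LinearMap.toContinuousLinearMap g).map_tsum hs
  simp only [LinearMap.coe_toContinuousLinearMap'] at hcont
  rw [hcont]
  rw [tsum_eq_single 0 (by
    intro n hn
    obtain ⟨m, rfl⟩ := Nat.exists_eq_succ_of_ne_zero hn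
    rw [map_smul, pow_succ']
    simp [hgf])]
  simp

private theorem stmt11.ringlem (a b : V →ₗ[ℂ] V)
    (haa : a * a = (1/2 : ℝ) • a) (hab : a * b + b * a = (1/2 : ℝ) • b) :
    (b + (2:ℝ) • (b*a - a*b)) * ((1/2:ℝ) • 1 - a) = 0 ∧
    a * (b + (2:ℝ) • (b*a - a*b)) = 0 ∧
    (b + (2:ℝ) • (a*b - b*a)) * a = 0 := by
  have hab' : b * a = (1/2:ℝ) • b - a * b := by
    rw [← hab]; abel
  have haba : a * (b * a) = 0 := by
    rw [hab', mul_sub, mul_smul_comm, ← mul_assoc, haa, smul_mul_assoc, sub_self]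
  have hA : a * (a * b) = (1/2:ℝ) • (a * b) := by
    rw [← mul_assoc, haa, smul_mul_assoc]
  refine ⟨?_, ?_, ?_⟩ <;>
  · simp only [mul_add, add_mul, mul_sub, sub_mul, smul_mul_assoc, mul_smul_comm,
      mul_one, one_mul, mul_assoc]
    try simp only [haba, haa, hA, smul_mul_assoc, mul_smul_comm, smul_zero, mul_zero,
      zero_mul, smul_sub, smul_add, sub_zero, zero_sub, add_zero, zero_add]
    try simp only [hab', smul_sub]
    module

end Helpers

/-- Lemma 5.2 of the paper: `U` a real vector space with a commutative
bilinear product and unit `e`, `V` a finite-dimensional complex inner product space (with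
Hermitian product linear in the first argument), `R : U → End_ℂ(V)` ℝ-linear with every `R x`
self-adjoint, `R e = (1/2)·Id` and `R (xy) = R x R y + R y R x`. For an idempotent `e₁` and
`y` with `e₁ y = (1/2) y`, set `e' := e - e₁` and `B := R y + 2(R y R e₁ - R e₁ R y)`. Then
`B ∘ R e' = 0` (so `exp B` is the identity on the range of `R e'`), `B* ∘ R e₁ = 0` (so
`exp B*` is the identity on the range of `R e₁`), and `R e₁ ∘ B = 0` (so
`R e₁ ∘ exp B = R e₁`). -/
theorem stmt11 {U : Type*} [AddCommGroup U] [Module ℝ U]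
    {V : Type*} [NormedAddCommGroup V] [InnerProductSpace ℂ V] [FiniteDimensional ℂ V]
    (mul : U →ₗ[ℝ] U →ₗ[ℝ] U) (hcomm : ∀ a b : U, mul a b = mul b a)
    (e : U) (hunit : ∀ x : U, mul e x = x)
    (R : U →ₗ[ℝ] (V →ₗ[ℂ] V))
    (hsymm : ∀ x : U, LinearMap.IsSymmetric (R x))
    (hRe : R e = (1 / 2 : ℝ) • LinearMap.id)
    (hrep : ∀ x y : U, R (mul x y) = R x ∘ₗ R y + R y ∘ₗ R x)
    (e₁ y : U) (he₁ : mul e₁ e₁ = e₁) (hy : mul e₁ y = (1 / 2 : ℝ) • y)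
    (e' : U) (he' : e' = e - e₁)
    (B : V →ₗ[ℂ] V)
    (hB : B = R y + (2 : ℝ) • (R y ∘ₗ R e₁ - R e₁ ∘ₗ R y)) :
    (B ∘ₗ R e' = 0 ∧ ∀ v ∈ LinearMap.range (R e'),
        NormedSpace.exp (LinearMap.toContinuousLinearMap B) v = v) ∧
      (LinearMap.adjoint B ∘ₗ R e₁ = 0 ∧ ∀ v ∈ LinearMap.range (R e₁),
        NormedSpace.exp (LinearMap.toContinuousLinearMap (LinearMap.adjoint B)) v = v) ∧
      (R e₁ ∘ₗ B = 0 ∧ ∀ v : V,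
        R e₁ (NormedSpace.exp (LinearMap.toContinuousLinearMap B) v) = R e₁ v) := by
  have haa : R e₁ * R e₁ = (1/2 : ℝ) • R e₁ := by
    have h := hrep e₁ e₁
    rw [he₁] at h
    rw [Module.End.mul_eq_comp]
    conv_rhs => rw [h]
    module
  have hab : R e₁ * R y + R y * R e₁ = (1/2 : ℝ) • R y := by
    have h := hrep e₁ y
    rw [hy, map_smul] at h
    simp only [Module.End.mul_eq_comp]
    rw [← h]
  obtain ⟨g1, g2, g3⟩ := stmt11.ringlem (R e₁) (R y) haa hab
  have hBB : B = R y + (2:ℝ) • (R y * R e₁ - R e₁ * R y) := by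
    rw [hB]; simp only [Module.End.mul_eq_comp]
  have hRe' : R e' = (1/2:ℝ) • 1 - R e₁ := by
    rw [he', map_sub, hRe, Module.End.one_eq_id]
  have hBRe' : B ∘ₗ R e' = 0 := by
    rw [← Module.End.mul_eq_comp, hBB, hRe']
    exact g1
  have hadjR : ∀ x : U, LinearMap.adjoint (R x) = R x := fun x => by
    rw [← LinearMap.star_eq_adjoint]
    exact (LinearMap.isSymmetric_iff_isSelfAdjoint _).mp (hsymm x)
  have hadj : LinearMap.adjoint B = R y + (2:ℝ) • (R e₁ * R y - R y * R e₁) := by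
    rw [hBB, map_add]
    rw [show ((2:ℝ) • (R y * R e₁ - R e₁ * R y) : V →ₗ[ℂ] V)
        = ((2:ℝ):ℂ) • (R y ∘ₗ R e₁ - R e₁ ∘ₗ R y) by
      rw [Complex.coe_smul]; simp only [Module.End.mul_eq_comp]]
    rw [map_smulₛₗ, map_sub, LinearMap.adjoint_comp, LinearMap.adjoint_comp,
      Complex.conj_ofReal, Complex.coe_smul,
      hadjR e₁, hadjR y]
    simp only [Module.End.mul_eq_comp]
  have hadjRe₁ : LinearMap.adjoint B ∘ₗ R e₁ = 0 := by
    rw [hadj, ← Module.End.mul_eq_comp]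
    exact g3
  have hRe₁B : R e₁ ∘ₗ B = 0 := by
    rw [hBB, ← Module.End.mul_eq_comp]
    exact g2
  refine ⟨⟨hBRe', ?_⟩, ⟨hadjRe₁, ?_⟩, hRe₁B, ?_⟩
  · rintro v ⟨w, rfl⟩
    apply stmt11.exp_fix
    have := LinearMap.congr_fun hBRe' w
    simpa using this
  · rintro v ⟨w, rfl⟩
    apply stmt11.exp_fix
    have := LinearMap.congr_fun hadjRe₁ w
    simpa using this
  · intro v
    apply stmt11.comp_exp_fix
    intro w
    have := LinearMap.congr_fun hRe₁B w
    simpa using this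
end

section
/- Let U be a finite-dimensional real inner product space equipped with a commutative bilinear product (x,y) ↦ xy that is associative with respect to the inner product, i.e. ⟨xy, z⟩ = ⟨y, xz⟩ for all x, y, z ∈ U; write T_x for left multiplication by x. Let V be a finite-dimensional complex inner product space and R : U → End_ℂ(V) a map such that every R_x is self-adjoint; write tr_ℝ R_x for the trace of R_x regarded as an ℝ-linear endomorphism of V. Let e' ∈ U be the unique element such that ⟨e', x⟩ = 2(tr T_x + tr_ℝ R_x) for every x ∈ U. Suppose A : U → U is a linear map, with adjoint ᵗA relative to ⟨·,·⟩, satisfying tr T_{(Ax)y} = tr T_{x(ᵗAy)} and tr_ℝ R_{(Ax)y} = tr_ℝ R_{x(ᵗAy)} for all x, y ∈ U. Then A ∘ T_{e'} = T_{e'} ∘ A. -/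
/-- Proposition 6.4 of the paper: `U` a finite-dimensional real inner product
space with a commutative bilinear product satisfying `⟨xy, z⟩ = ⟨y, xz⟩` (`T_x` denoting left
multiplication), `V` a finite-dimensional complex inner product space, `R : U → End_ℂ(V)` with
each `R x` self-adjoint, `tr_ℝ (R x)` the real trace. Let `e'` satisfy
`⟨e', x⟩ = 2 (tr T_x + tr_ℝ R_x)` for all `x`, and let `A : U → U` be linear with real adjoint
`ᵗA` such that `tr T_{(Ax)y} = tr T_{x(ᵗAy)}` and `tr_ℝ R_{(Ax)y} = tr_ℝ R_{x(ᵗAy)}` for all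
`x, y`. Then `A ∘ T_{e'} = T_{e'} ∘ A`. -/
theorem stmt12 {U : Type*} [NormedAddCommGroup U] [InnerProductSpace ℝ U]
    [FiniteDimensional ℝ U]
    {V : Type*} [NormedAddCommGroup V] [InnerProductSpace ℂ V] [FiniteDimensional ℂ V]
    (mul : U →ₗ[ℝ] U →ₗ[ℝ] U) (hcomm : ∀ a b : U, mul a b = mul b a)
    (hassoc : ∀ x y z : U, (inner ℝ (mul x y) z : ℝ) = inner ℝ y (mul x z))
    (R : U → (V →ₗ[ℂ] V)) (hsymm : ∀ x : U, LinearMap.IsSymmetric (R x))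
    (e' : U)
    (he' : ∀ x : U, (inner ℝ e' x : ℝ) =
      2 * (LinearMap.trace ℝ U (mul x) + LinearMap.trace ℝ V ((R x).restrictScalars ℝ)))
    (A : U →ₗ[ℝ] U)
    (hT : ∀ x y : U, LinearMap.trace ℝ U (mul (mul (A x) y)) =
      LinearMap.trace ℝ U (mul (mul x (LinearMap.adjoint A y))))
    (hR : ∀ x y : U, LinearMap.trace ℝ V ((R (mul (A x) y)).restrictScalars ℝ) =
      LinearMap.trace ℝ V ((R (mul x (LinearMap.adjoint A y))).restrictScalars ℝ)) :
    A ∘ₗ mul e' = mul e' ∘ₗ A := by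
  -- key: ⟨mul e' w, z⟩ = ⟨e', mul w z⟩
  have key : ∀ w z : U, (inner ℝ (mul e' w) z : ℝ) = inner ℝ e' (mul w z) := by
    intro w z
    rw [hcomm e' w, hassoc]
  ext x
  apply ext_inner_right ℝ
  intro y
  have h1 : (inner ℝ ((A ∘ₗ mul e') x) y : ℝ) = inner ℝ (mul e' x) (LinearMap.adjoint A y) := by
    simp [LinearMap.adjoint_inner_right]
  rw [h1, key, he', ← hT, ← hR, ← he', ← key]
  simp
end

section
/- Let U be a real inner product space and ν ∈ U. Let V be a finite-dimensional complex inner product space with Hermitian inner product h, linear in the first argument; let j denote multiplication by i. Let A be a self-adjoint ℂ-linear endomorphism of V, let P ⊆ V be a complex subspace on which A is positive semidefinite (h(Aq, q) ≥ 0 for all q ∈ P), and let S₀ ⊆ V be a real subspace with S₀ ∩ jS₀ = {0}; for s = σ₁ + jσ₂ with σ₁, σ₂ ∈ S₀ write s̄ := σ₁ − jσ₂. Let H : (S₀ ⊕ jS₀) × (S₀ ⊕ jS₀) → ℂ be a kernel of positive type, i.e. for every n, all a₁,…,aₙ ∈ ℂ and all s₁,…,sₙ ∈ S₀ ⊕ jS₀,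 the sum Σ_{k,l} a_k · conj(a_l) · H(s_l, s_k) is a nonnegative real number. Define, for points p = (z₁, z₂, q, s) and p' = (z₁', z₂', q', s') in U × U × P × (S₀ ⊕ jS₀), H̃(p, p') := exp( i⟨ν, z₁ − z₁'⟩ − ⟨ν, z₂ + z₂'⟩ + 4 h(Aq, q') + 2 h(As, s̄) + 2 h(A s̄', s') ) · H(s, s'). Then H̃ is a kernel of positive type: for every n, all a₁,…,aₙ ∈ ℂ and all points p₁,…,pₙ, the sum Σ_{k,l} a_k · conj(a_l) · H̃(p_l, p_k) is a nonnegative real number. -/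
open ComplexOrder

variable {V : Type*} [NormedAddCommGroup V] [InnerProductSpace ℂ V] [FiniteDimensional ℂ V]

/-- Gram kernels: kernels of the form `N i j = ∑ t, conj (B t i) * B t j`. -/
def IsGram {n : ℕ} (N : Fin n → Fin n → ℂ) : Prop :=
  ∃ (m : ℕ) (B : Fin m → Fin n → ℂ), ∀ i j, N i j = ∑ t, (starRingEnd ℂ) (B t i) * B t j

lemma IsGram.mul {n : ℕ} {N N' : Fin n → Fin n → ℂ} (h : IsGram N) (h' : IsGram N') :
    IsGram (fun i j => N i j * N' i j) := by
  obtain ⟨m, B, hB⟩ := h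
  obtain ⟨m', B', hB'⟩ := h'
  refine ⟨m * m', fun t i => B (finProdFinEquiv.symm t).1 i * B' (finProdFinEquiv.symm t).2 i,
    fun i j => ?_⟩
  have : N i j * N' i j = ∑ p : Fin m × Fin m',
      (starRingEnd ℂ) (B p.1 i * B' p.2 i) * (B p.1 j * B' p.2 j) := by
    rw [hB, hB', Finset.sum_mul_sum, Fintype.sum_prod_type]
    refine Finset.sum_congr rfl fun u _ => Finset.sum_congr rfl fun v _ => ?_
    rw [map_mul]; ring
  show N i j * N' i j = _
  rw [this, ← Equiv.sum_comp (finProdFinEquiv.symm : Fin (m * m') ≃ Fin m × Fin m')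
    (fun p : Fin m × Fin m' => (starRingEnd ℂ) (B p.1 i * B' p.2 i) * (B p.1 j * B' p.2 j))]

lemma IsGram.one {n : ℕ} : IsGram (fun _ _ : Fin n => (1 : ℂ)) :=
  ⟨1, fun _ _ => 1, fun i j => by simp⟩

lemma IsGram.pow {n : ℕ} {N : Fin n → Fin n → ℂ} (h : IsGram N) (p : ℕ) :
    IsGram (fun i j => N i j ^ p) := by
  induction p with
  | zero => simpa using IsGram.one
  | succ p ih => simpa [pow_succ] using ih.mul h

lemma isGram_of_posSemidef {n : ℕ} {M : Matrix (Fin n) (Fin n) ℂ} (h : M.PosSemidef) :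
    IsGram (fun i j => M i j) := by
  obtain ⟨m, v, hv⟩ := Matrix.posSemidef_iff_eq_sum_vecMulVec.mp h
  exact ⟨m, fun t i => (starRingEnd ℂ) (v t i), fun i j => by
    rw [hv]; simp [Matrix.sum_apply, Matrix.vecMulVec_apply]⟩

/-- Schur-type lemma at the level of sums: multiplying a kernel of positive type by a Gram
kernel preserves positivity of the associated quadratic form. -/
lemma posK_gram {n : ℕ} {K N : Fin n → Fin n → ℂ}
    (hK : ∀ a : Fin n → ℂ, 0 ≤ ∑ k, ∑ l, a k * (starRingEnd ℂ) (a l) * K l k)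
    (hN : IsGram N) (a : Fin n → ℂ) :
    0 ≤ ∑ k, ∑ l, a k * (starRingEnd ℂ) (a l) * (N l k * K l k) := by
  obtain ⟨m, B, hB⟩ := hN
  have key : ∀ k l : Fin n, a k * (starRingEnd ℂ) (a l) * (N l k * K l k)
      = ∑ t, (a k * B t k) * (starRingEnd ℂ) (a l * B t l) * K l k := by
    intro k l
    rw [hB l k, Finset.sum_mul, Finset.mul_sum]
    exact Finset.sum_congr rfl fun t _ => by rw [map_mul]; ring
  calc (0:ℂ) ≤ ∑ t : Fin m, ∑ k, ∑ l,
        (a k * B t k) * (starRingEnd ℂ) (a l * B t l) * K l k :=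
        Finset.sum_nonneg fun t _ => hK fun k => a k * B t k
    _ = ∑ k, ∑ l, ∑ t, (a k * B t k) * (starRingEnd ℂ) (a l * B t l) * K l k := by
        rw [Finset.sum_comm]
        exact Finset.sum_congr rfl fun k _ => Finset.sum_comm
    _ = ∑ k, ∑ l, a k * (starRingEnd ℂ) (a l) * (N l k * K l k) :=
        Finset.sum_congr rfl fun k _ => Finset.sum_congr rfl fun l _ => (key k l).symm

/-- A nonnegative limit of partial sums which are all nonnegative (in the complex order)
is nonnegative. -/
lemma nonneg_of_partial {u : ℕ → ℂ} {S : ℂ}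
    (hpos : ∀ P, 0 ≤ ∑ p ∈ Finset.range P, u p) (h : HasSum u S) : 0 ≤ S := by
  have ht := h.tendsto_sum_nat
  have hre : Filter.Tendsto (fun P => (∑ p ∈ Finset.range P, u p).re) Filter.atTop (nhds S.re) :=
    (Complex.continuous_re.tendsto S).comp ht
  have him : Filter.Tendsto (fun P => (∑ p ∈ Finset.range P, u p).im) Filter.atTop (nhds S.im) :=
    (Complex.continuous_im.tendsto S).comp ht
  rw [Complex.le_def]
  constructor
  · simpa using ge_of_tendsto hre (Filter.Eventually.of_forall fun P =>
      by simpa using (Complex.le_def.mp (hpos P)).1)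
  · have : Filter.Tendsto (fun _ : ℕ => (0:ℝ)) Filter.atTop (nhds S.im) := by
      refine him.congr fun P => ?_
      exact ((Complex.le_def.mp (hpos P)).2).symm
    simpa using (tendsto_nhds_unique this tendsto_const_nhds).symm

/-- The matrix `4⟨q j, A (q i)⟩` is positive semidefinite when `A` is symmetric and
positive semidefinite on a subspace `P` containing all the `q k`. -/
lemma gram_psd {V : Type*} [NormedAddCommGroup V] [InnerProductSpace ℂ V]
    {n : ℕ} (A : V →ₗ[ℂ] V) (hA : LinearMap.IsSymmetric A)
    (P : Submodule ℂ V) (hP : ∀ q ∈ P, 0 ≤ (inner ℂ q (A q) : ℂ))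
    (q : Fin n → V) (hq : ∀ k, q k ∈ P) :
    Matrix.PosSemidef (Matrix.of fun i j => (4:ℂ) * (inner ℂ (q j) (A (q i)) : ℂ)) := by
  refine Matrix.PosSemidef.of_dotProduct_mulVec_nonneg ?_ ?_
  · ext i j
    show star ((4:ℂ) * (inner ℂ (q i) (A (q j)) : ℂ)) = (4:ℂ) * (inner ℂ (q j) (A (q i)) : ℂ)
    rw [star_mul', show (star (4:ℂ)) = 4 by norm_num, RCLike.star_def, inner_conj_symm, hA]
  · intro x
    set y : V := ∑ i, (starRingEnd ℂ) (x i) • q i with hy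
    have hyP : y ∈ P := Submodule.sum_mem _ fun i _ => Submodule.smul_mem _ _ (hq i)
    have expand : (inner ℂ y (A y) : ℂ) =
        ∑ i, ∑ j, x i * ((starRingEnd ℂ) (x j) * (inner ℂ (q i) (A (q j)) : ℂ)) := by
      rw [hy, map_sum, sum_inner]
      refine Finset.sum_congr rfl fun i _ => ?_
      rw [inner_smul_left, starRingEnd_self_apply, inner_sum, Finset.mul_sum]
      refine Finset.sum_congr rfl fun j _ => ?_
      rw [map_smul, inner_smul_right]
    have key : dotProduct (star x)
        ((Matrix.of fun i j => (4:ℂ) * (inner ℂ (q j) (A (q i)) : ℂ)).mulVec x)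
        = 4 * (inner ℂ y (A y) : ℂ) := by
      rw [expand]
      simp only [dotProduct, Matrix.mulVec, Matrix.of_apply, Pi.star_apply,
        RCLike.star_def, Finset.mul_sum]
      rw [Finset.sum_comm]
      exact Finset.sum_congr rfl fun i _ => Finset.sum_congr rfl fun j _ => by ring
    rw [key]
    exact mul_nonneg (by norm_num) (hP y hyP)

/-- Proposition 4.10 of the paper, operator form. With the Hermitian inner
product `h` linear in the first argument (`h v w = inner w v` in Mathlib's convention),
`A` self-adjoint and positive semidefinite on the complex subspace `P`, and `S₀` a real
subspace with `S₀ ∩ jS₀ = {0}`, every element of `S₀ ⊕ jS₀` is written `s = σ₁ + i σ₂` with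
`σ₁, σ₂ ∈ S₀`, and `s̄ := σ₁ - i σ₂`. If `H` is of positive type on `S₀ ⊕ jS₀`, then
`H̃(p, p') := exp(i⟨ν, z₁ - z₁'⟩ - ⟨ν, z₂ + z₂'⟩ + 4 h(Aq, q') + 2 h(As, s̄) + 2 h(As̄', s'))
· H(s, s')` is of positive type on `U × U × P × (S₀ ⊕ jS₀)`; nonnegativity of the complex
sums is expressed via the complex order. -/
theorem stmt13 {U : Type*} [NormedAddCommGroup U] [InnerProductSpace ℝ U] (ν : U)
    (A : V →ₗ[ℂ] V) (hA : LinearMap.IsSymmetric A)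
    (P : Submodule ℂ V) (hP : ∀ q ∈ P, 0 ≤ (inner ℂ q (A q) : ℂ))
    (S₀ : Submodule ℝ V) (hS₀ : S₀ ⊓ S₀.map smulI = ⊥)
    (H : V → V → ℂ)
    (hH : ∀ (n : ℕ) (a : Fin n → ℂ) (σ₁ σ₂ : Fin n → V),
      (∀ k, σ₁ k ∈ S₀) → (∀ k, σ₂ k ∈ S₀) →
      0 ≤ ∑ k, ∑ l, a k * (starRingEnd ℂ) (a l) *
        H (σ₁ l + Complex.I • σ₂ l) (σ₁ k + Complex.I • σ₂ k)) :
    ∀ (n : ℕ) (a : Fin n → ℂ) (z₁ z₂ : Fin n → U) (q σ₁ σ₂ : Fin n → V),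
      (∀ k, q k ∈ P) → (∀ k, σ₁ k ∈ S₀) → (∀ k, σ₂ k ∈ S₀) →
      0 ≤ ∑ k, ∑ l, a k * (starRingEnd ℂ) (a l) *
        (Complex.exp (Complex.I * ((inner ℝ ν (z₁ l - z₁ k) : ℝ) : ℂ)
            - ((inner ℝ ν (z₂ l + z₂ k) : ℝ) : ℂ)
            + 4 * (inner ℂ (q k) (A (q l)) : ℂ)
            + 2 * (inner ℂ (σ₁ l - Complex.I • σ₂ l) (A (σ₁ l + Complex.I • σ₂ l)) : ℂ)
            + 2 * (inner ℂ (σ₁ k + Complex.I • σ₂ k) (A (σ₁ k - Complex.I • σ₂ k)) : ℂ)) *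
          H (σ₁ l + Complex.I • σ₂ l) (σ₁ k + Complex.I • σ₂ k)) := by
  intro n a z₁ z₂ q σ₁ σ₂ hq h1 h2
  -- abbreviations
  set s : Fin n → V := fun m => σ₁ m + Complex.I • σ₂ m with hs
  set sb : Fin n → V := fun m => σ₁ m - Complex.I • σ₂ m with hsb
  set c : Fin n → ℂ := fun m =>
    Complex.I * ((inner ℝ ν (z₁ m) : ℝ) : ℂ) - ((inner ℝ ν (z₂ m) : ℝ) : ℂ)
      + 2 * (inner ℂ (sb m) (A (s m)) : ℂ) with hc
  set f : Fin n → ℂ := fun m => Complex.exp (c m) with hf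
  set M : Matrix (Fin n) (Fin n) ℂ :=
    Matrix.of (fun i j => (4:ℂ) * (inner ℂ (q j) (A (q i)) : ℂ)) with hM
  set K : Fin n → Fin n → ℂ := fun i j => H (s i) (s j) with hK
  -- positivity data
  have hKpos : ∀ b : Fin n → ℂ, 0 ≤ ∑ k, ∑ l, b k * (starRingEnd ℂ) (b l) * K l k :=
    fun b => hH n b σ₁ σ₂ h1 h2
  have hMg : IsGram (fun i j => M i j) :=
    isGram_of_posSemidef (gram_psd A hA P hP q hq)
  have hN1 : IsGram (fun i j => f i * (starRingEnd ℂ) (f j)) :=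
    ⟨1, fun _ i => (starRingEnd ℂ) (f i), fun i j => by simp⟩
  -- conjugate of the diagonal part
  have hconj : ∀ m, (starRingEnd ℂ) (c m) =
      -(Complex.I * ((inner ℝ ν (z₁ m) : ℝ) : ℂ)) - ((inner ℝ ν (z₂ m) : ℝ) : ℂ)
        + 2 * (inner ℂ (s m) (A (sb m)) : ℂ) := by
    intro m
    rw [hc]
    simp only [map_add, map_sub, map_mul, Complex.conj_I, Complex.conj_ofReal, map_ofNat]
    rw [inner_conj_symm, hA]
    ring
  -- the exponent splits
  have hexp : ∀ k l : Fin n, Complex.exp (Complex.I * ((inner ℝ ν (z₁ l - z₁ k) : ℝ) : ℂ)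
      - ((inner ℝ ν (z₂ l + z₂ k) : ℝ) : ℂ)
      + 4 * (inner ℂ (q k) (A (q l)) : ℂ)
      + 2 * (inner ℂ (σ₁ l - Complex.I • σ₂ l) (A (σ₁ l + Complex.I • σ₂ l)) : ℂ)
      + 2 * (inner ℂ (σ₁ k + Complex.I • σ₂ k) (A (σ₁ k - Complex.I • σ₂ k)) : ℂ))
      = f l * (starRingEnd ℂ) (f k) * Complex.exp (M l k) := by
    intro k l
    have hE : Complex.I * ((inner ℝ ν (z₁ l - z₁ k) : ℝ) : ℂ)
        - ((inner ℝ ν (z₂ l + z₂ k) : ℝ) : ℂ)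
        + 4 * (inner ℂ (q k) (A (q l)) : ℂ)
        + 2 * (inner ℂ (σ₁ l - Complex.I • σ₂ l) (A (σ₁ l + Complex.I • σ₂ l)) : ℂ)
        + 2 * (inner ℂ (σ₁ k + Complex.I • σ₂ k) (A (σ₁ k - Complex.I • σ₂ k)) : ℂ)
        = c l + (starRingEnd ℂ) (c k) + M l k := by
      rw [hconj k, hc]
      simp only [hs, hsb, hM, Matrix.of_apply, inner_sub_right, inner_add_right,
        Complex.ofReal_sub, Complex.ofReal_add]
      ring
    rw [hE, Complex.exp_add, Complex.exp_add, Complex.exp_conj, hf]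
  -- the coefficient kernel
  set C : Fin n → Fin n → ℂ :=
    fun k l => a k * (starRingEnd ℂ) (a l) * (f l * (starRingEnd ℂ) (f k)) * K l k with hC
  -- termwise expansion of the exponential
  have hterm : ∀ k l : Fin n, HasSum (fun p : ℕ => C k l * (M l k ^ p / (p.factorial : ℂ)))
      (C k l * Complex.exp (M l k)) := by
    intro k l
    have h0 := (NormedSpace.expSeries_div_hasSum_exp (M l k)).mul_left (C k l)
    rwa [← Complex.exp_eq_exp_ℂ] at h0
  have hSsum : HasSum (fun p : ℕ => ∑ k, ∑ l, C k l * (M l k ^ p / (p.factorial : ℂ)))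
      (∑ k, ∑ l, C k l * Complex.exp (M l k)) :=
    hasSum_sum fun k _ => hasSum_sum fun l _ => hterm k l
  -- partial sums are nonnegative
  have hpos : ∀ Pn : ℕ, 0 ≤ ∑ p ∈ Finset.range Pn,
      ∑ k, ∑ l, C k l * (M l k ^ p / (p.factorial : ℂ)) := by
    intro Pn
    refine Finset.sum_nonneg fun p _ => ?_
    have hfac : (∑ k, ∑ l, C k l * (M l k ^ p / (p.factorial : ℂ)))
        = ((p.factorial : ℝ) : ℂ)⁻¹ * ∑ k, ∑ l, a k * (starRingEnd ℂ) (a l) *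
            ((f l * (starRingEnd ℂ) (f k) * M l k ^ p) * K l k) := by
      rw [Finset.mul_sum]
      refine Finset.sum_congr rfl fun k _ => ?_
      rw [Finset.mul_sum]
      refine Finset.sum_congr rfl fun l _ => ?_
      rw [hC]
      push_cast
      ring
    rw [hfac]
    refine mul_nonneg ?_ ?_
    · rw [← Complex.ofReal_inv]
      exact Complex.zero_le_real.mpr (by positivity)
    · exact posK_gram hKpos
        (by simpa using hN1.mul (hMg.pow p) :
          IsGram (fun i j => f i * (starRingEnd ℂ) (f j) * M i j ^ p)) a
  have hfinal := nonneg_of_partial hpos hSsum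
  -- identify the goal with the limit
  have hgoal : (∑ k, ∑ l, a k * (starRingEnd ℂ) (a l) *
        (Complex.exp (Complex.I * ((inner ℝ ν (z₁ l - z₁ k) : ℝ) : ℂ)
            - ((inner ℝ ν (z₂ l + z₂ k) : ℝ) : ℂ)
            + 4 * (inner ℂ (q k) (A (q l)) : ℂ)
            + 2 * (inner ℂ (σ₁ l - Complex.I • σ₂ l) (A (σ₁ l + Complex.I • σ₂ l)) : ℂ)
            + 2 * (inner ℂ (σ₁ k + Complex.I • σ₂ k) (A (σ₁ k - Complex.I • σ₂ k)) : ℂ)) *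
          H (σ₁ l + Complex.I • σ₂ l) (σ₁ k + Complex.I • σ₂ k)))
      = ∑ k, ∑ l, C k l * Complex.exp (M l k) := by
    refine Finset.sum_congr rfl fun k _ => Finset.sum_congr rfl fun l _ => ?_
    rw [hexp k l, hC, hK]
    simp only [hs]
    ring
  rw [hgoal]
  exact hfinal
end
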